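/- arXiv:1011.6432 — 6 statements merged into one kernel-verified Lean document; each statement's English description precedes it below -/
import Mathlib

section
/- In a data braid, the marked positions are exactly the positions that start a factor of the ordered partition: for a data braid w with ordered partition w_1 · ... · w_k, a position i carries the datum d_1 if and only if i is the first position of some factor w_j. -/
variable {A : Type*} {D : Type*} [LinearOrder D]

/-- An ordered partition of a data word: a factorization into nonempty consecutive
factors, strictly increasing in the data component, such that the first datum of each
next factor is ≤ the last datum of the previous factor (maximality). -/
def IsOrderedPartition (P : List (List (A × D))) (w : List (A × D)) : Prop :=
  P.flatten = w ∧
  (∀ b ∈ P, b ≠ []) ∧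
  (∀ b ∈ P, (b.map Prod.snd).Chain' (· < ·)) ∧
  P.Chain' (fun b c => ∀ x ∈ (c.map Prod.snd).head?, ∀ y ∈ (b.map Prod.snd).getLast?, x ≤ y)

/-- A data braid w.r.t. a marking of the alphabet: the minimum datum appears at the
first position, the data projection of each factor of the ordered partition is a
subsequence of that of the next factor, and the marked positions are exactly those
carrying the first datum. -/
def IsDataBraid (marked : A → Prop) (w : List (A × D)) : Prop :=
  ∃ P : List (List (A × D)), IsOrderedPartition P w ∧
    (∀ d₁ ∈ (w.map Prod.snd).head?,
      (∀ p ∈ w, d₁ ≤ p.2) ∧ (∀ p ∈ w, marked p.1 ↔ p.2 = d₁)) ∧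
    P.Chain' (fun b c => (b.map Prod.snd).Sublist (c.map Prod.snd))

/-- Position `i` is the first position of some factor of the partition `P`. -/
def startsFactor (P : List (List (A × D))) (i : ℕ) : Prop :=
  ∃ j < P.length, i = ((P.take j).map List.length).sum

lemma head_le_of_chain'_lt {l : List D} (h : l.Chain' (· < ·)) :
    ∀ x ∈ l, ∀ y ∈ l.head?, y ≤ x := by
  intro x hx y hy
  rw [show l.Chain' (· < ·) ↔ _ from List.isChain_iff_pairwise] at h
  cases l with
  | nil => simp at hx
  | cons a t =>
    simp only [List.head?_cons, Option.mem_def, Option.some.injEq] at hy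
    subst hy
    rcases List.mem_cons.mp hx with rfl | hx
    · exact le_refl _
    · exact le_of_lt ((List.pairwise_cons.mp h).1 x hx)

lemma startsFactor_cons (b : List (A × D)) (P' : List (List (A × D))) (i : ℕ) :
    startsFactor (b :: P') i ↔ i = 0 ∨ (b.length ≤ i ∧ startsFactor P' (i - b.length)) := by
  constructor
  · rintro ⟨j, hj, rfl⟩
    cases j with
    | zero => left; simp
    | succ j' =>
      right
      simp only [List.take_succ_cons, List.map_cons, List.sum_cons]
      refine ⟨Nat.le_add_right _ _, j', by simpa using hj, by omega⟩
  · rintro (rfl | ⟨hle, j, hj, hsum⟩)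
    · exact ⟨0, by simp, by simp⟩
    · refine ⟨j + 1, by simpa using hj, ?_⟩
      simp only [List.take_succ_cons, List.map_cons, List.sum_cons]
      omega

lemma startsFactor_iff (P : List (List (A × D)))
    (hne : ∀ b ∈ P, b ≠ [])
    (hinc : ∀ b ∈ P, (b.map Prod.snd).Chain' (· < ·))
    (hch : P.Chain' (fun b c => ∀ x ∈ (c.map Prod.snd).head?, ∀ y ∈ (b.map Prod.snd).getLast?,
      x ≤ y))
    (i : ℕ) (hi : i < P.flatten.length) :
    startsFactor P i ↔
      (i = 0 ∨ (P.flatten[i]'hi).2 ≤ (P.flatten[i-1]'(lt_of_le_of_lt (Nat.pred_le i) hi)).2) := by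
  induction P generalizing i with
  | nil => simp at hi
  | cons b P' ih =>
    have hbne : b ≠ [] := hne b (by simp)
    have hbpos : 0 < b.length := List.length_pos_iff.mpr hbne
    rw [startsFactor_cons]
    simp only [List.flatten_cons] at hi ⊢
    by_cases hib : i < b.length
    · constructor
      · rintro (rfl | ⟨hle, _⟩)
        · left; rfl
        · omega
      · rintro (rfl | hle)
        · left; rfl
        · -- contradiction: inside a strictly increasing factor
          rcases Nat.eq_zero_or_pos i with rfl | hipos
          · left; rfl
          · exfalso
            rw [List.getElem_append_left hib, List.getElem_append_left (by omega : i - 1 < b.length)] at hle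
            have hchain := hinc b (by simp)
            rw [show (b.map Prod.snd).Chain' (· < ·) ↔ _ from List.isChain_iff_getElem] at hchain
            have := hchain (i - 1) (by simp; omega)
            simp only [List.get_eq_getElem, List.getElem_map] at this
            have h2 : i - 1 + 1 = i := by omega
            simp only [h2] at this
            exact absurd hle (not_le.mpr this)
    · push_neg at hib
      have hipos : 0 < i := by omega
      have hi' : i - b.length < P'.flatten.length := by
        simp only [List.length_append] at hi; omega
      have hPne : P' ≠ [] := by
        intro h; rw [h] at hi'; simp at hi'
      constructor
      · rintro (rfl | ⟨hle, hs⟩)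
        · omega
        · right
          rw [List.getElem_append_right hib]
          have heads : ∀ (hP'ne : P' ≠ []) (hb'ne : P'.head hP'ne ≠ []),
              ((P'.head hP'ne).head hb'ne).2 ≤ (b.getLast hbne).2 := by
            intro hP'ne hb'ne
            obtain ⟨b', P'', rfl⟩ := List.exists_cons_of_ne_nil hP'ne
            have hrel := (List.isChain_cons_cons.mp hch).1
            simp only [List.head_cons] at hb'ne ⊢
            exact hrel _ (by rw [List.head?_map, List.head?_eq_head hb'ne]; rfl)
              _ (by rw [List.getLast?_map, List.getLast?_eq_getLast hbne]; rfl)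
          rcases Nat.eq_or_lt_of_le hib with heq | hlt
          · -- i = b.length : boundary, use the chain condition
            obtain ⟨b', P'', rfl⟩ := List.exists_cons_of_ne_nil hPne
            have hb'ne : b' ≠ [] := hne b' (by simp)
            have hb'pos : 0 < b'.length := List.length_pos_iff.mpr hb'ne
            have h0 : i - b.length = 0 := by omega
            have h1 : i - 1 < b.length := by omega
            rw [List.getElem_append_left h1]
            simp only [h0, List.flatten_cons]
            rw [List.getElem_append_left hb'pos, List.getElem_zero hb'pos]
            have h2 : i - 1 = b.length - 1 := by omega
            simp only [h2]
            rw [← List.getLast_eq_getElem hbne]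
            exact heads hPne (by simpa using hb'ne)
          · -- i > b.length : use the induction hypothesis
            have h1 : b.length ≤ i - 1 := by omega
            rw [List.getElem_append_right h1]
            have := (ih (fun c hc => hne c (by simp [hc]))
              (fun c hc => hinc c (by simp [hc])) (List.isChain_cons.mp hch).2
              (i - b.length) hi').mp hs
            rcases this with h0 | hle
            · omega
            · have h3 : i - 1 - b.length = i - b.length - 1 := by omega
              simp only [h3]
              exact hle
      · rintro (rfl | hle)
        · omega
        · refine Or.inr ⟨hib, ?_⟩
          apply (ih (fun c hc => hne c (by simp [hc]))
            (fun c hc => hinc c (by simp [hc])) (List.isChain_cons.mp hch).2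
            (i - b.length) hi').mpr
          rcases Nat.eq_or_lt_of_le hib with heq | hlt
          · left; omega
          · right
            rw [List.getElem_append_right hib,
              List.getElem_append_right (by omega : b.length ≤ i - 1)] at hle
            have h3 : i - 1 - b.length = i - b.length - 1 := by omega
            simp only [h3] at hle
            exact hle

lemma factor_heads_eq (d₁ : D) : ∀ (Q : List (List (A × D))),
    (∀ b ∈ Q, b ≠ []) →
    (∀ b ∈ Q, (b.map Prod.snd).Chain' (· < ·)) →
    Q.Chain' (fun b c => (b.map Prod.snd).Sublist (c.map Prod.snd)) →
    (∀ p ∈ Q.flatten, d₁ ≤ p.2) →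
    (∀ b ∈ Q.head?, ∀ p ∈ b.head?, p.2 = d₁) →
    ∀ b ∈ Q, ∀ p ∈ b.head?, p.2 = d₁ := by
  intro Q
  induction Q with
  | nil => simp
  | cons b Q' ih =>
    intro hne hinc hsub hmin hfirst c hc p hp
    have hbne : b ≠ [] := hne b (by simp)
    have hb1 : (b.head hbne).2 = d₁ :=
      hfirst b rfl _ (by rw [List.head?_eq_head hbne]; rfl)
    rcases List.mem_cons.mp hc with rfl | hc
    · rw [List.head?_eq_head hbne] at hp
      simp only [Option.mem_def, Option.some.injEq] at hp
      exact hp ▸ hb1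
    · refine ih (fun x hx => hne x (by simp [hx])) (fun x hx => hinc x (by simp [hx]))
        (List.isChain_cons.mp hsub).2
        (fun q hq => hmin q (by simp only [List.flatten_cons, List.mem_append]; right; exact hq))
        ?_ c hc p hp
      -- new first-head condition for Q'
      intro b' hb' q hq
      cases Q' with
      | nil => simp at hb'
      | cons b'' Q'' =>
        simp only [List.head?_cons, Option.mem_def, Option.some.injEq] at hb'
        subst hb'
        have hb''ne : b'' ≠ [] := hne b'' (by simp)
        have hsubrel := (List.isChain_cons.mp hsub).1 b'' rfl
        have hd₁mem : d₁ ∈ b''.map Prod.snd := by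
          have : d₁ ∈ b.map Prod.snd := by
            rw [← hb1]; exact List.mem_map_of_mem (f := Prod.snd) (List.head_mem hbne)
          exact hsubrel.mem this
        have hle : ∀ y ∈ (b''.map Prod.snd).head?, y ≤ d₁ :=
          fun y hy => head_le_of_chain'_lt (hinc b'' (by simp)) d₁ hd₁mem y hy
        have hq' : q ∈ b''.head? := hq
        rw [List.head?_eq_head hb''ne] at hq'
        simp only [Option.mem_def, Option.some.injEq] at hq'
        subst hq'
        have h1 : (b''.head hb''ne).2 ≤ d₁ := hle _ (by
          rw [List.head?_map, List.head?_eq_head hb''ne]; rfl)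
        have h2 : d₁ ≤ (b''.head hb''ne).2 := hmin _ (by
          simp only [List.flatten_cons, List.mem_append]
          right
          exact Or.inl (List.head_mem hb''ne))
        exact le_antisymm h1 h2

lemma flatten_getElem_start (Q : List (List (A × D))) (j : ℕ) (hj : j < Q.length)
    (hne : ∀ b ∈ Q, b ≠ [])
    (hlt : ((Q.take j).map List.length).sum < Q.flatten.length) :
    Q.flatten[((Q.take j).map List.length).sum]'hlt
      = (Q[j]'hj).head (hne _ (List.getElem_mem hj)) := by
  induction Q generalizing j with
  | nil => simp at hj
  | cons b Q' ih =>
    cases j with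
    | zero =>
      have hbne : b ≠ [] := hne b (by simp)
      simp only [List.take_zero, List.map_nil, List.sum_nil, List.flatten_cons]
      rw [List.getElem_append_left (List.length_pos_iff.mpr hbne), List.getElem_zero]
      simp [List.head_eq_getElem]
    | succ j' =>
      simp only [List.take_succ_cons, List.map_cons, List.sum_cons, List.flatten_cons] at hlt ⊢
      rw [List.getElem_append_right (Nat.le_add_right _ _)]
      have h1 : b.length + ((Q'.take j').map List.length).sum - b.length
          = ((Q'.take j').map List.length).sum := by omega
      simp only [h1]
      rw [ih j' (by simpa using hj) (fun x hx => hne x (by simp [hx])) (by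
        simp only [List.length_append] at hlt; omega)]
      simp

/-- In a data braid, the positions carrying the first datum `d₁` (the marked positions)
are exactly the positions starting some factor of the ordered partition. -/
theorem dataBraid_marked_iff_startsFactor (marked : A → Prop) (w : List (A × D))
    (hw : w ≠ []) (hb : IsDataBraid marked w)
    (P : List (List (A × D))) (hP : IsOrderedPartition P w) :
    ∀ i (hi : i < w.length),
      (w.get ⟨i, hi⟩).2 = (w.head hw).2 ↔ startsFactor P i := by
  obtain ⟨hPf, hPne, hPinc, hPch⟩ := hP
  obtain ⟨Q, ⟨hQf, hQne, hQinc, hQch⟩, hmin', hQsub⟩ := hb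
  intro i hi
  have hhead : (w.map Prod.snd).head? = some (w.head hw).2 := by
    rw [List.head?_map, List.head?_eq_head hw]; rfl
  obtain ⟨hmin, -⟩ := hmin' _ hhead
  have hiP : i < P.flatten.length := by rw [hPf]; exact hi
  have hiQ : i < Q.flatten.length := by rw [hQf]; exact hi
  have hP_iff := startsFactor_iff P hPne hPinc hPch i hiP
  have hQ_iff := startsFactor_iff Q hQne hQinc hQch i hiQ
  have hgetP : ∀ (k : ℕ) (hk : k < P.flatten.length), P.flatten[k] = w[k]'(hPf ▸ hk) := by
    intro k hk; simp only [hPf]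
  have hgetQ : ∀ (k : ℕ) (hk : k < Q.flatten.length), Q.flatten[k] = w[k]'(hQf ▸ hk) := by
    intro k hk; simp only [hQf]
  rw [hgetP i hiP, hgetP (i-1) (lt_of_le_of_lt (Nat.pred_le i) hiP)] at hP_iff
  rw [hgetQ i hiQ, hgetQ (i-1) (lt_of_le_of_lt (Nat.pred_le i) hiQ)] at hQ_iff
  rw [hP_iff]
  simp only [List.get_eq_getElem]
  constructor
  · -- datum d₁ implies boundary condition
    intro hd
    rcases Nat.eq_zero_or_pos i with rfl | hipos
    · exact Or.inl rfl
    · refine Or.inr ?_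
      rw [hd]
      exact hmin _ (List.getElem_mem _)
  · -- boundary condition implies datum d₁
    intro h
    have hSF : startsFactor Q i := hQ_iff.mpr h
    obtain ⟨j, hj, rfl⟩ := hSF
    have hne' : Q[j] ≠ [] := hQne _ (List.getElem_mem hj)
    have hflat := flatten_getElem_start Q j hj hQne hiQ
    rw [hgetQ _ hiQ] at hflat
    rw [hflat]
    -- the head of every factor of Q carries d₁
    have hQne2 : Q ≠ [] := by
      intro hQnil
      rw [hQnil] at hQf
      exact hw (hQf.symm)
    have hfirstQ : ∀ b ∈ Q.head?, ∀ p ∈ b.head?, p.2 = (w.head hw).2 := by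
      obtain ⟨b, Q', rfl⟩ := List.exists_cons_of_ne_nil hQne2
      intro b' hb' p hp
      simp only [List.head?_cons, Option.mem_def, Option.some.injEq] at hb'
      subst hb'
      have hbne : b ≠ [] := hQne _ List.mem_cons_self
      rw [List.head?_eq_head hbne] at hp
      simp only [Option.mem_def, Option.some.injEq] at hp
      subst hp
      have h1 : w.head? = some (b.head hbne) := by
        rw [← hQf]
        obtain ⟨a, t, rfl⟩ := List.exists_cons_of_ne_nil hbne
        rfl
      have h2 := List.head?_eq_head hw
      rw [h1] at h2
      simp only [Option.some.injEq] at h2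
      exact congrArg Prod.snd h2
    have hminQ : ∀ p ∈ Q.flatten, (w.head hw).2 ≤ p.2 := by
      rw [hQf]; exact hmin
    exact factor_heads_eq _ Q hQne hQinc hQsub hminQ hfirstQ Q[j]
      (List.getElem_mem hj) _ (by rw [List.head?_eq_head hne']; rfl)
end

section
/- A timed word obtained from a data braid is a timed braid: let w = (a_1,d_1)...(a_n,d_n) be a data braid with ordered partition into k factors, let f be an order-preserving injection from the set of data values of w into [0,1) with f(d_1) = 0, and define t_i = c_i + f(d_i) where c_i is the number of factors ending strictly before position i; then (a_1,t_1)...(a_n,t_n) is a timed braid, i.e., t_1 = 0, the t_i are strictly increasing, positions with integer time stamp are exactly the marked positions, and for all i < n with t_i < ⌊t_n⌋, t_i + 1 appears among t_{i+1},...,t_n. -/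
variable {A : Type*} {D : Type*} [LinearOrder D]

/-- A timed braid w.r.t. a marking of the alphabet: the first time stamp is `0`, time
stamps are strictly increasing, the marked positions are exactly those with integer
time stamps, and whenever `t i < ⌊t n⌋` the value `t i + 1` appears later. -/
def IsTimedBraid {A : Type*} (marked : A → Prop) (u : List (A × ℝ)) : Prop :=
  (∀ p ∈ u.head?, (p : A × ℝ).2 = 0) ∧
  (u.map Prod.snd).Chain' (· < ·) ∧
  (∀ p ∈ u, marked p.1 ↔ ∃ k : ℤ, p.2 = (k : ℝ)) ∧
  (∀ q ∈ u.getLast?, ∀ i (hi : i < u.length),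
    (u.get ⟨i, hi⟩).2 < (⌊(q : A × ℝ).2⌋ : ℝ) →
    ∃ j, ∃ hj : j < u.length, i < j ∧ (u.get ⟨j, hj⟩).2 = (u.get ⟨i, hi⟩).2 + 1)

/-- The number of factors of the partition `P` ending strictly before position `i`. -/
def factorsEndedBefore {α : Type*} (P : List (List α)) (i : ℕ) : ℕ :=
  (List.range P.length).countP (fun j => decide (((P.take (j+1)).map List.length).sum ≤ i))

namespace TBAux

def S {α : Type*} (P : List (List α)) (j : ℕ) : ℕ := ((P.take j).map List.length).sum

lemma S_succ {α : Type*} (P : List (List α)) (j : ℕ) (hj : j < P.length) :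
    S P (j+1) = S P j + P[j].length := by
  unfold S
  have h : j < (P.map List.length).length := by simpa using hj
  rw [List.map_take, List.map_take, List.sum_take_succ _ _ h]
  simp

lemma S_mono {α : Type*} (P : List (List α)) {j j' : ℕ} (h : j ≤ j') : S P j ≤ S P j' := by
  unfold S
  have h1 : P.take j = (P.take j').take j := by rw [List.take_take, Nat.min_eq_left h]
  rw [h1]
  obtain ⟨r, hr⟩ := (P.take j').take_prefix j
  conv_rhs => rw [← hr]
  simp

lemma S_top {α : Type*} (P : List (List α)) : S P P.length = P.flatten.length := by
  unfold S
  simp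

lemma S_lt_succ {α : Type*} {P : List (List α)} (hne : ∀ b ∈ P, b ≠ []) {j : ℕ}
    (hj : j < P.length) : S P j < S P (j+1) := by
  rw [S_succ P j hj]
  have : P[j] ≠ [] := hne _ (P.getElem_mem hj)
  have : 0 < P[j].length := List.length_pos_iff.mpr this
  omega

lemma getElem?_flatten {α : Type*} (P : List (List α)) (j m : ℕ)
    (hj : j < P.length) (hm : m < P[j].length) :
    P.flatten[S P j + m]? = P[j][m]? := by
  induction P generalizing j with
  | nil => simp at hj
  | cons b P ih =>
    cases j with
    | zero =>
      have hm' : m < b.length := by simpa using hm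
      simp only [S, List.take_zero, List.map_nil, List.sum_nil, Nat.zero_add,
        List.flatten_cons]
      rw [List.getElem?_append_left hm']
      simp
    | succ j =>
      have hj' : j < P.length := by simpa using hj
      have hS : S (b :: P) (j+1) = b.length + S P j := by
        unfold S; simp [List.take_succ_cons]
      rw [hS, List.flatten_cons, Nat.add_assoc, List.getElem?_append_right (by omega),
        Nat.add_sub_cancel_left]
      exact ih j hj' (by simpa using hm)

lemma flatten_getElem_eq {α : Type*} {P : List (List α)} {j m : ℕ}
    (hj : j < P.length) (hm : m < P[j].length) (hi : S P j + m < P.flatten.length) :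
    P.flatten[S P j + m] = P[j][m] := by
  have h := getElem?_flatten P j m hj hm
  rw [List.getElem?_eq_getElem hi, List.getElem?_eq_getElem hm] at h
  exact Option.some.inj h

lemma exists_factor {α : Type*} {P : List (List α)} (hne : ∀ b ∈ P, b ≠ []) {i : ℕ}
    (hi : i < P.flatten.length) :
    ∃ j < P.length, S P j ≤ i ∧ i < S P (j+1) := by
  classical
  set j := Nat.findGreatest (fun j => S P j ≤ i) P.length with hjdef
  have h0 : S P 0 ≤ i := by simp [S]
  have hspec : S P j ≤ i :=
    Nat.findGreatest_spec (P := fun j' => S P j' ≤ i) (m := 0) (Nat.zero_le _) h0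
  have hjk : j < P.length := by
    rcases Nat.lt_or_ge j P.length with h | h
    · exact h
    · exfalso
      have hle : j ≤ P.length := Nat.findGreatest_le _
      have : j = P.length := le_antisymm hle h
      rw [this, S_top] at hspec
      omega
  refine ⟨j, hjk, hspec, ?_⟩
  by_contra hcon
  push_neg at hcon
  exact Nat.findGreatest_is_greatest (Nat.lt_succ_self j) (by omega) hcon

lemma countP_range_lt (j k : ℕ) (h : j ≤ k) :
    (List.range k).countP (fun x => decide (x < j)) = j := by
  induction k with
  | zero => simp only [List.range_zero, List.countP_nil]; omega
  | succ k ih =>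
    rw [List.range_succ, List.countP_append]
    rcases Nat.lt_or_ge j (k+1) with hj | hj
    · have hj' : j ≤ k := by omega
      rw [ih hj']
      have : (decide (k < j)) = false := by simp; omega
      simp [List.countP_cons, this]
    · have hjk : j = k + 1 := by omega
      subst hjk
      have h1 : (List.range k).countP (fun x => decide (x < k + 1)) = k := by
        rw [List.countP_eq_length.mpr]
        · simp
        · intro a ha
          simp only [List.mem_range] at ha
          simp; omega
      rw [h1]
      simp [List.countP_cons]

lemma factorsEndedBefore_eq' {α : Type*} {P : List (List α)} (hne : ∀ b ∈ P, b ≠ [])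
    {j i : ℕ} (hj : j < P.length) (h1 : S P j ≤ i) (h2 : i < S P (j+1)) :
    (List.range P.length).countP
      (fun j' => decide (((P.take (j'+1)).map List.length).sum ≤ i)) = j := by
  have hagree : ∀ a ∈ List.range P.length,
      (fun j' => decide (((P.take (j'+1)).map List.length).sum ≤ i)) a
        = true ↔ (fun x => decide (x < j)) a = true := by
    intro a ha
    simp only [List.mem_range] at ha
    simp only [decide_eq_true_eq]
    show S P (a+1) ≤ i ↔ a < j
    constructor
    · intro hle
      by_contra hcon
      push_neg at hcon
      have : S P (j+1) ≤ S P (a+1) := S_mono P (by omega)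
      omega
    · intro hlt
      have : S P (a+1) ≤ S P j := S_mono P (by omega)
      omega
  rw [List.countP_congr hagree]
  exact countP_range_lt j P.length (by omega)

lemma head_factor_le {A D : Type*} [LinearOrder D]
    {b b₀ r r₀ : List (A × D)}
    (he : b ++ r = b₀ ++ r₀) (hb : b ≠ [])
    (hinc₀ : (b₀.map Prod.snd).Chain' (· < ·))
    (hmax : ∀ x ∈ (r.map Prod.snd).head?, ∀ y ∈ (b.map Prod.snd).getLast?, x ≤ y) :
    b₀.length ≤ b.length := by
  by_contra hcon
  push_neg at hcon
  have hpre : b <+: b₀ := by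
    have h1 : b <+: b₀ ++ r₀ := he ▸ List.prefix_append b r
    rcases List.prefix_or_prefix_of_prefix h1 (List.prefix_append b₀ r₀) with h | h
    · exact h
    · exact absurd h.length_le (by omega)
  obtain ⟨t, ht⟩ := hpre
  have htne : t ≠ [] := by
    intro h
    rw [h, List.append_nil] at ht
    rw [ht] at hcon
    omega
  obtain ⟨x, t', rfl⟩ := List.exists_cons_of_ne_nil htne
  have hr : r = x :: (t' ++ r₀) := by
    have h2 : b ++ r = b ++ (x :: (t' ++ r₀)) := by
      rw [he, ← ht]
      simp
    exact List.append_cancel_left h2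
  have hbm : b.map Prod.snd ≠ [] := by simpa using hb
  have hy : (b.map Prod.snd).getLast? = some ((b.map Prod.snd).getLast hbm) :=
    List.getLast?_eq_getLast hbm
  set y := (b.map Prod.snd).getLast hbm with hydef
  have hxy : x.2 ≤ y := by
    apply hmax x.2 _ y hy
    rw [hr]
    simp
  have hyx : y < x.2 := by
    have : ((b ++ x :: t').map Prod.snd).Chain' (· < ·) := ht ▸ hinc₀
    rw [List.map_append, List.Chain', List.isChain_append] at this
    exact this.2.2 y hy x.2 (by simp)
  exact absurd hxy (not_le.mpr hyx)

lemma op_unique {A D : Type*} [LinearOrder D] (P : List (List (A × D))) :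
    ∀ Q : List (List (A × D)),
    P.flatten = Q.flatten →
    (∀ b ∈ P, b ≠ []) →
    (∀ b ∈ P, (b.map Prod.snd).Chain' (· < ·)) →
    P.Chain' (fun b c => ∀ x ∈ (c.map Prod.snd).head?, ∀ y ∈ (b.map Prod.snd).getLast?, x ≤ y) →
    (∀ b ∈ Q, b ≠ []) →
    (∀ b ∈ Q, (b.map Prod.snd).Chain' (· < ·)) →
    Q.Chain' (fun b c => ∀ x ∈ (c.map Prod.snd).head?, ∀ y ∈ (b.map Prod.snd).getLast?, x ≤ y) →
    P = Q := by
  induction P with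
  | nil =>
    intro Q hflat _ _ _ hQne _ _
    cases Q with
    | nil => rfl
    | cons q Q' =>
      exfalso
      apply hQne q List.mem_cons_self
      have : q ++ Q'.flatten = [] := by simpa using hflat.symm
      exact (List.append_eq_nil_iff.mp this).1
  | cons b P' ih =>
    intro Q hflat hPne hPinc hPch hQne hQinc hQch
    have hbne : b ≠ [] := hPne b List.mem_cons_self
    cases Q with
    | nil =>
      exfalso
      apply hbne
      have : b ++ P'.flatten = [] := by simpa using hflat
      exact (List.append_eq_nil_iff.mp this).1
    | cons b₀ Q' =>
      have hb₀ne : b₀ ≠ [] := hQne b₀ List.mem_cons_self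
      have he : b ++ P'.flatten = b₀ ++ Q'.flatten := by simpa using hflat
      have hmaxP : ∀ x ∈ ((P'.flatten).map Prod.snd).head?,
          ∀ y ∈ (b.map Prod.snd).getLast?, x ≤ y := by
        cases P' with
        | nil => simp
        | cons c P'' =>
          have hcne : c ≠ [] := hPne c (by simp)
          have hrel := (List.isChain_cons_cons.mp hPch).1
          intro x hx y hy
          apply hrel x _ y hy
          obtain ⟨z, c', rfl⟩ := List.exists_cons_of_ne_nil hcne
          simpa using hx
      have hmaxQ : ∀ x ∈ ((Q'.flatten).map Prod.snd).head?,
          ∀ y ∈ (b₀.map Prod.snd).getLast?, x ≤ y := by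
        cases Q' with
        | nil => simp
        | cons c Q'' =>
          have hcne : c ≠ [] := hQne c (by simp)
          have hrel := (List.isChain_cons_cons.mp hQch).1
          intro x hx y hy
          apply hrel x _ y hy
          obtain ⟨z, c', rfl⟩ := List.exists_cons_of_ne_nil hcne
          simpa using hx
      have hlen1 : b₀.length ≤ b.length :=
        head_factor_le he hbne (hQinc b₀ (by simp)) hmaxP
      have hlen2 : b.length ≤ b₀.length :=
        head_factor_le he.symm hb₀ne (hPinc b (by simp)) hmaxQ
      have hbb : b = b₀ := by
        have h1 : b <+: b₀ ++ Q'.flatten := he ▸ List.prefix_append b P'.flatten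
        rcases List.prefix_or_prefix_of_prefix h1 (List.prefix_append b₀ Q'.flatten) with h | h
        · exact h.eq_of_length (by omega)
        · exact (h.eq_of_length (by omega)).symm
      subst hbb
      have hflat' : P'.flatten = Q'.flatten := List.append_cancel_left he
      have := ih Q' hflat'
        (fun x hx => hPne x (List.mem_cons_of_mem _ hx))
        (fun x hx => hPinc x (List.mem_cons_of_mem _ hx))
        (List.IsChain.tail hPch)
        (fun x hx => hQne x (List.mem_cons_of_mem _ hx))
        (fun x hx => hQinc x (List.mem_cons_of_mem _ hx))
        (List.IsChain.tail hQch)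
      rw [this]

end TBAux

/-- The timed word obtained from a data braid — via an order-preserving injection `f`
of its data values into `[0,1)` sending the first datum to `0`, with integer parts
counting the factors of the ordered partition ended strictly before each position —
is a timed braid. -/
theorem timedBraid_of_dataBraid (marked : A → Prop) (w : List (A × D))
    (hb : IsDataBraid marked w)
    (P : List (List (A × D))) (hP : IsOrderedPartition P w)
    (f : D → ℝ)
    (hrange : ∀ p ∈ w, f p.2 ∈ Set.Ico (0:ℝ) 1)
    (hmono : ∀ p ∈ w, ∀ q ∈ w, p.2 < q.2 → f p.2 < f q.2)
    (hf1 : ∀ p ∈ w.head?, f (p : A × D).2 = 0) :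
    IsTimedBraid marked
      (w.mapIdx (fun i p => (p.1, (factorsEndedBefore P i : ℝ) + f p.2))) := by
  classical
  obtain ⟨hflat, hne, hinc, hchain⟩ := hP
  obtain ⟨P₀, hP₀, hd, hsub⟩ := hb
  have hPeq : P = P₀ :=
    TBAux.op_unique P P₀ (by rw [hflat, hP₀.1]) hne hinc hchain hP₀.2.1 hP₀.2.2.1 hP₀.2.2.2
  rw [← hPeq] at hsub
  clear hPeq hP₀
  subst hflat
  set w := P.flatten with hw
  rcases eq_or_ne w [] with hnil | hwne
  · rw [hnil]
    refine ⟨by simp, List.isChain_nil, by simp, by simp⟩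
  -- basic setup
  have hw0 : 0 < w.length := List.length_pos_iff.mpr hwne
  have hk : 0 < P.length := by
    rcases P with _ | ⟨b, P'⟩
    · simp [hw] at hwne
    · simp
  have hStop : TBAux.S P P.length = w.length := TBAux.S_top P
  -- the first datum
  set d₁ : D := (w[0]'hw0).2 with hd₁
  have hhead : w.head? = some (w[0]'hw0) := by
    rw [List.head?_eq_getElem?, List.getElem?_eq_getElem hw0]
  have hheadm : (w.map Prod.snd).head? = some d₁ := by
    rw [List.head?_map, hhead]; rfl
  obtain ⟨hmin, hmark⟩ := hd d₁ hheadm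
  have hf0 : f d₁ = 0 := hf1 (w[0]'hw0) (by rw [hhead]; rfl)
  -- f is positive away from d₁, and zero exactly at d₁
  have hfpos : ∀ p ∈ w, p.2 ≠ d₁ → 0 < f p.2 := by
    intro p hp hne'
    have h1 : d₁ < p.2 := lt_of_le_of_ne (hmin p hp) (Ne.symm hne')
    rw [← hf0]
    exact hmono (w[0]'hw0) (List.getElem_mem hw0) p hp h1
  -- evaluation of factorsEndedBefore
  have hfe : ∀ {j i : ℕ}, j < P.length → TBAux.S P j ≤ i → i < TBAux.S P (j+1) →
      factorsEndedBefore P i = j := by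
    intro j i h1 h2 h3
    exact TBAux.factorsEndedBefore_eq' hne h1 h2 h3
  -- the timed word
  set u := w.mapIdx (fun i p => (p.1, (factorsEndedBefore P i : ℝ) + f p.2)) with hu
  have hul : u.length = w.length := by rw [hu]; simp
  have huget : ∀ (i : ℕ) (hi : i < w.length),
      u[i]'(by omega) =
        ((w[i]'hi).1, (factorsEndedBefore P i : ℝ) + f (w[i]'hi).2) := by
    intro i hi
    exact List.getElem_mapIdx
  refine ⟨?_, ?_, ?_, ?_⟩
  -- (1) first time stamp is 0
  · intro p hp
    have hu0 : 0 < u.length := by omega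
    rw [List.head?_eq_getElem?, List.getElem?_eq_getElem hu0] at hp
    have hp' : p = u[0]'hu0 := by simpa using hp.symm
    have hc0 : factorsEndedBefore P 0 = 0 := by
      apply hfe hk
      · simp [TBAux.S]
      · have : TBAux.S P 0 < TBAux.S P 1 := TBAux.S_lt_succ hne hk
        simpa [TBAux.S] using this
    rw [hp', huget 0 hw0, hc0]
    rw [← hd₁] at *
    rw [hf0]
    norm_num
  -- (2) strictly increasing time stamps
  · rw [List.Chain', List.isChain_map, List.isChain_iff_getElem]
    intro i hilen
    have hiw : i < w.length := by omega
    have hi1w : i + 1 < w.length := by omega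
    obtain ⟨j, hj, h1, h2⟩ := TBAux.exists_factor hne hiw
    obtain ⟨m, rfl⟩ : ∃ m, i = TBAux.S P j + m := ⟨i - TBAux.S P j, by omega⟩
    have hSsucc := TBAux.S_succ P j hj
    have hm : m < P[j].length := by omega
    have hgi : w[TBAux.S P j + m]'hiw = P[j][m]'hm :=
      TBAux.flatten_getElem_eq hj hm hiw
    have hci : factorsEndedBefore P (TBAux.S P j + m) = j := hfe hj (by omega) h2
    rw [huget _ hiw, huget _ hi1w]
    rcases Nat.lt_or_ge (TBAux.S P j + m + 1) (TBAux.S P (j+1)) with hA | hB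
    · -- same factor
      have hm1 : m + 1 < P[j].length := by omega
      have hgi1 : w[TBAux.S P j + m + 1]'hi1w = P[j][m+1]'hm1 :=
        TBAux.flatten_getElem_eq hj hm1 hi1w
      have hci1 : factorsEndedBefore P (TBAux.S P j + m + 1) = j := hfe hj (by omega) hA
      have hdlt : (P[j][m]'hm).2 < (P[j][m+1]'hm1).2 := by
        have hch := hinc P[j] (P.getElem_mem hj)
        rw [List.Chain', List.isChain_iff_getElem] at hch
        have := hch m (by simp only [List.length_map]; omega)
        simpa using this
      have hmem1 : (P[j][m]'hm) ∈ w := by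
        rw [hw]
        exact List.mem_flatten.mpr ⟨P[j], P.getElem_mem hj, List.getElem_mem hm⟩
      have hmem2 : (P[j][m+1]'hm1) ∈ w := by
        rw [hw]
        exact List.mem_flatten.mpr ⟨P[j], P.getElem_mem hj, List.getElem_mem hm1⟩
      have hflt := hmono _ hmem1 _ hmem2 hdlt
      rw [hgi, hgi1, hci, hci1]
      simpa using hflt
    · -- next factor starts at i + 1
      have hSeq : TBAux.S P (j+1) = TBAux.S P j + m + 1 := by omega
      have hj1 : j + 1 < P.length := by
        rcases Nat.lt_or_ge (j+1) P.length with h | h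
        · exact h
        · exfalso
          have : TBAux.S P P.length ≤ TBAux.S P (j+1) := TBAux.S_mono P h
          omega
      have hci1 : factorsEndedBefore P (TBAux.S P j + m + 1) = j + 1 := by
        apply hfe hj1 (by omega)
        have := TBAux.S_lt_succ hne hj1
        omega
      have hmem1 : (w[TBAux.S P j + m]'hiw) ∈ w := List.getElem_mem hiw
      have hmem2 : (w[TBAux.S P j + m + 1]'hi1w) ∈ w := List.getElem_mem hi1w
      have hr1 := hrange _ hmem1
      have hr2 := hrange _ hmem2
      rw [hci, hci1]
      simp only [Set.mem_Ico] at hr1 hr2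
      push_cast
      nlinarith [hr1.1, hr1.2, hr2.1, hr2.2]
  -- (3) marked iff integer time stamp
  · intro p hp
    rw [List.mem_iff_getElem] at hp
    obtain ⟨i, hi, rfl⟩ := hp
    have hiw : i < w.length := by omega
    rw [huget i hiw]
    have hmem : (w[i]'hiw) ∈ w := List.getElem_mem hiw
    constructor
    · intro hmk
      have hdi : (w[i]'hiw).2 = d₁ := (hmark _ hmem).mp hmk
      refine ⟨(factorsEndedBefore P i : ℤ), ?_⟩
      rw [hdi, hf0]
      push_cast
      ring
    · rintro ⟨z, hz⟩
      simp only at hz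
      have hfr := hrange _ hmem
      simp only [Set.mem_Ico] at hfr
      have hz' : f (w[i]'hiw).2 = (z : ℝ) - (factorsEndedBefore P i : ℝ) := by linarith
      have hzi : (0:ℤ) ≤ z - (factorsEndedBefore P i : ℤ) := by
        have : (0:ℝ) ≤ ((z - (factorsEndedBefore P i : ℤ)) : ℝ) := by push_cast; linarith [hfr.1]
        exact_mod_cast this
      have hzi2 : z - (factorsEndedBefore P i : ℤ) < 1 := by
        have : ((z - (factorsEndedBefore P i : ℤ)) : ℝ) < 1 := by push_cast; linarith [hfr.2]
        exact_mod_cast this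
      have hz0 : z = (factorsEndedBefore P i : ℤ) := by omega
      have hfz : f (w[i]'hiw).2 = 0 := by
        rw [hz', hz0]; push_cast; ring
      have hdi : (w[i]'hiw).2 = d₁ := by
        by_contra hcon
        exact absurd hfz (ne_of_gt (hfpos _ hmem hcon))
      exact (hmark _ hmem).mpr hdi
  -- (4) witnesses for t i + 1
  · intro q hq i hi hlt
    have hun : u ≠ [] := by
      intro h; rw [h] at hul; simp at hul; omega
    have hun0 : u.length - 1 < u.length := by omega
    have hlastw : w.length - 1 < w.length := by omega
    rw [List.getLast?_eq_getElem?, hul, List.getElem?_eq_getElem (by omega : w.length - 1 < u.length)] at hq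
    have hq' : q = u[w.length - 1]'(by omega) := by simpa using hq.symm
    -- the last position lies in the last factor
    have hck : factorsEndedBefore P (w.length - 1) = P.length - 1 := by
      have hkk : P.length - 1 < P.length := by omega
      apply hfe hkk
      · have h := TBAux.S_lt_succ hne hkk
        have h2 : P.length - 1 + 1 = P.length := by omega
        rw [h2] at h
        omega
      · have h2 : P.length - 1 + 1 = P.length := by omega
        rw [h2, hStop]
        omega
    have hqval : q.2 = ((P.length - 1 : ℕ) : ℝ) + f (w[w.length - 1]'hlastw).2 := by
      rw [hq', huget (w.length - 1) hlastw, hck]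
    have hfrq := hrange _ (List.getElem_mem hlastw)
    simp only [Set.mem_Ico] at hfrq
    have hfloor : ⌊q.2⌋ = ((P.length - 1 : ℕ) : ℤ) := by
      rw [hqval, add_comm]
      have hcast : ((P.length - 1 : ℕ) : ℝ) = (((P.length - 1 : ℕ) : ℤ) : ℝ) := by push_cast; ring
      rw [hcast, Int.floor_add_intCast,
        Int.floor_eq_zero_iff.mpr (Set.mem_Ico.mpr ⟨hfrq.1, hfrq.2⟩)]
      simp
    -- locate position i in its factor
    have hiw : i < w.length := by omega
    simp only [List.get_eq_getElem] at hlt ⊢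
    rw [huget i hiw] at hlt ⊢
    obtain ⟨j, hj, h1, h2⟩ := TBAux.exists_factor hne hiw
    have hci : factorsEndedBefore P i = j := hfe hj h1 h2
    have hfr := hrange _ (List.getElem_mem hiw)
    simp only [Set.mem_Ico] at hfr
    rw [hfloor, hci] at hlt
    have hjlt : j < P.length - 1 := by
      by_contra hcon
      push_neg at hcon
      have : ((P.length - 1 : ℕ) : ℝ) ≤ (j : ℝ) := by exact_mod_cast hcon
      have : ((P.length - 1 : ℕ) : ℝ) ≤ (j : ℝ) + f (w[i]'hiw).2 := by linarith [hfr.1]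
      simp only at hlt
      push_cast at hlt this
      linarith
    have hj1 : j + 1 < P.length := by omega
    -- the datum at position i occurs in the next factor
    obtain ⟨m, rfl⟩ : ∃ m, i = TBAux.S P j + m := ⟨i - TBAux.S P j, by omega⟩
    have hSsucc := TBAux.S_succ P j hj
    have hm : m < P[j].length := by omega
    have hgi : w[TBAux.S P j + m]'hiw = P[j][m]'hm :=
      TBAux.flatten_getElem_eq hj hm hiw
    have hsubl : (P[j].map Prod.snd).Sublist ((P[j+1]'hj1).map Prod.snd) := by
      rw [List.Chain', List.isChain_iff_getElem] at hsub
      have := hsub j (by omega)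
      simpa using this
    have hdin : (P[j][m]'hm).2 ∈ (P[j+1]'hj1).map Prod.snd := by
      apply hsubl.mem
      exact List.mem_map.mpr ⟨_, List.getElem_mem hm, rfl⟩
    rw [List.mem_iff_getElem] at hdin
    obtain ⟨m', hm'len, hm'⟩ := hdin
    have hm'lt : m' < (P[j+1]'hj1).length := by simpa using hm'len
    have hdat : ((P[j+1]'hj1)[m']'hm'lt).2 = (P[j][m]'hm).2 := by
      rw [← hm']
      simp
    -- the witness position
    set i' := TBAux.S P (j+1) + m' with hi'
    have hSsucc1 := TBAux.S_succ P (j+1) hj1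
    have hi'w : i' < w.length := by
      have hle : TBAux.S P (j+1+1) ≤ TBAux.S P P.length := TBAux.S_mono P (by omega)
      rw [hStop] at hle
      omega
    have hgi' : w[i']'hi'w = (P[j+1]'hj1)[m']'hm'lt :=
      TBAux.flatten_getElem_eq hj1 hm'lt hi'w
    have hci' : factorsEndedBefore P i' = j + 1 := hfe hj1 (by omega) (by omega)
    refine ⟨i', by omega, by omega, ?_⟩
    rw [huget i' hi'w, hci', hgi', hdat, hgi, hci]
    push_cast
    ring
end

section
/- A data word obtained from a timed braid by taking fractional parts is a data braid: if w = (a_1,t_1)...(a_n,t_n) is a timed braid and one replaces each time stamp t_i by its fractional part {t_i} (taking D = [0,1) ⊆ ℝ with its usual order as the data domain), then the resulting data word (a_1,{t_1})...(a_n,{t_n}) is a data braid. -/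
variable {A : Type*} {D : Type*} [LinearOrder D]

open List in
lemma sublist_of_subset_of_chain' {α : Type*} [LinearOrder α] :
    ∀ {l₂ l₁ : List α}, l₁ ⊆ l₂ → l₁.Chain' (· < ·) → l₂.Chain' (· < ·) → l₁.Sublist l₂ := by
  intro l₂
  induction l₂ with
  | nil => intro l₁ hs _ _; simp [List.subset_nil.mp hs]
  | cons b l₂' ih =>
    intro l₁ hs h1 h2
    match l₁ with
    | [] => exact List.nil_sublist _
    | a :: l₁' =>
      have h1' := List.isChain_iff_pairwise.mp h1
      have h2' := List.isChain_iff_pairwise.mp h2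
      by_cases hab : a = b
      · subst hab
        refine List.Sublist.cons₂ a (ih ?_ h1.tail h2.tail)
        intro x hx
        have hxl : a < x := (List.pairwise_cons.mp h1').1 x hx
        rcases List.mem_cons.mp (hs (List.mem_cons_of_mem _ hx)) with h | h
        · exact absurd h (by rintro rfl; exact lt_irrefl _ hxl)
        · exact h
      · have hal : a ∈ l₂' := by
          rcases List.mem_cons.mp (hs List.mem_cons_self) with h | h
          · exact absurd h hab
          · exact h
        have hba : b < a := (List.pairwise_cons.mp h2').1 a hal
        refine (ih ?_ h1 h2.tail).cons b
        intro x hx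
        have hax : a ≤ x := by
          rcases List.mem_cons.mp hx with rfl | hx
          · exact le_refl _
          · exact le_of_lt ((List.pairwise_cons.mp h1').1 x hx)
        rcases List.mem_cons.mp (hs hx) with h | h
        · exact absurd h (by rintro rfl; exact absurd (lt_of_lt_of_le hba hax) (lt_irrefl _))
        · exact h

lemma fract_eq_zero_iff_exists {t : ℝ} : Int.fract t = 0 ↔ ∃ k : ℤ, t = (k : ℝ) := by
  constructor
  · intro h
    exact ⟨⌊t⌋, by have := Int.floor_add_fract t; rw [h, add_zero] at this; exact this.symm⟩
  · rintro ⟨k, rfl⟩; exact Int.fract_intCast k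

lemma fract_lt_fract_of_floor_eq {s t : ℝ} (h : s < t) (hf : ⌊s⌋ = ⌊t⌋) :
    Int.fract s < Int.fract t := by
  unfold Int.fract
  have : (⌊s⌋ : ℝ) = (⌊t⌋ : ℝ) := by exact_mod_cast hf
  linarith

def glueRun {α : Type*} (k : α → ℤ) (p : α) : List (List α) → List (List α)
  | (q :: b) :: P => if k p = k q then (p :: q :: b) :: P else [p] :: (q :: b) :: P
  | P => [p] :: P

def splitRuns {α : Type*} (k : α → ℤ) : List α → List (List α)
  | [] => []
  | p :: l => glueRun k p (splitRuns k l)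

lemma splitRuns_spec {α : Type*} (k : α → ℤ) (l : List α)
    (hl : l.Pairwise (fun p q => k p ≤ k q)) :
    (splitRuns k l).flatten = l ∧
    (∀ b ∈ splitRuns k l, b ≠ []) ∧
    (∀ b ∈ splitRuns k l, ∀ p ∈ b, ∀ q ∈ b, k p = k q) ∧
    (splitRuns k l).Pairwise (fun b c => ∀ p ∈ b, ∀ q ∈ c, k p < k q) := by
  induction l with
  | nil => simp [splitRuns]
  | cons p l ih =>
    obtain ⟨hle, hl'⟩ := List.pairwise_cons.mp hl
    obtain ⟨hfl, hne, heq, hpw⟩ := ih hl'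
    rw [splitRuns]
    match hS : splitRuns k l with
    | [] =>
      rw [hS] at hfl; simp at hfl
      subst hfl
      simp [glueRun, splitRuns, hS]
    | [] :: P =>
      rw [hS] at hne
      exact absurd rfl (hne [] List.mem_cons_self)
    | (q :: b) :: P =>
      rw [hS] at hfl hne heq hpw
      have hq : q ∈ l := by rw [← hfl]; simp
      have hq' : q ∈ l := hq
      have hmemfst : ∀ r ∈ q :: b, k r = k q := fun r hr =>
        heq _ List.mem_cons_self r hr q List.mem_cons_self
      have hmemP : ∀ c ∈ P, ∀ r ∈ c, k q < k r := fun c hc r hr =>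
        (List.pairwise_cons.mp hpw).1 c hc q List.mem_cons_self r hr
      have hplt : ∀ c ∈ P, ∀ r ∈ c, k p < k r := fun c hc r hr =>
        lt_of_le_of_lt (hle q hq) (hmemP c hc r hr)
      rw [glueRun]
      by_cases hpq : k p = k q
      · simp only [hpq, if_pos rfl]
        refine ⟨by simpa using hfl, ?_, ?_, ?_⟩
        · intro c hc
          rcases List.mem_cons.mp hc with rfl | hc
          · simp
          · exact hne c (List.mem_cons_of_mem _ hc)
        · intro c hc r hr s hs
          rcases List.mem_cons.mp hc with rfl | hc
          · have keyr : k r = k q := by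
              rcases List.mem_cons.mp hr with rfl | hr
              · exact hpq
              · exact hmemfst r hr
            have keys : k s = k q := by
              rcases List.mem_cons.mp hs with rfl | hs
              · exact hpq
              · exact hmemfst s hs
            rw [keyr, keys]
          · exact heq c (List.mem_cons_of_mem _ hc) r hr s hs
        · refine List.pairwise_cons.mpr ⟨?_, (List.pairwise_cons.mp hpw).2⟩
          intro c hc r hr s hs
          have keyr : k r = k q := by
            rcases List.mem_cons.mp hr with rfl | hr
            · exact hpq
            · exact hmemfst r hr
          rw [keyr]
          exact hmemP c hc s hs
      · simp only [if_neg hpq]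
        have hplt2 : ∀ r ∈ q :: b, k p < k r := by
          intro r hr
          rw [hmemfst r hr]
          exact lt_of_le_of_ne (hle q hq) hpq
        refine ⟨by simpa using hfl, ?_, ?_, ?_⟩
        · intro c hc
          rcases List.mem_cons.mp hc with rfl | hc
          · simp
          · exact hne c hc
        · intro c hc r hr s hs
          rcases List.mem_cons.mp hc with rfl | hc
          · simp at hr hs; rw [hr, hs]
          · exact heq c hc r hr s hs
        · refine List.pairwise_cons.mpr ⟨?_, hpw⟩
          intro c hc r hr s hs
          simp at hr; subst hr
          rcases List.mem_cons.mp hc with rfl | hc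
          · exact hplt2 s hs
          · exact hplt c hc s hs

theorem dataBraid_of_timedBraid_aux {A : Type*} (marked : A → Prop) (u : List (A × ℝ))
    (h : (∀ p ∈ u.head?, (p : A × ℝ).2 = 0) ∧
  (u.map Prod.snd).Chain' (· < ·) ∧
  (∀ p ∈ u, marked p.1 ↔ ∃ k : ℤ, p.2 = (k : ℝ)) ∧
  (∀ q ∈ u.getLast?, ∀ i (hi : i < u.length),
    (u.get ⟨i, hi⟩).2 < (⌊(q : A × ℝ).2⌋ : ℝ) →
    ∃ j, ∃ hj : j < u.length, i < j ∧ (u.get ⟨j, hj⟩).2 = (u.get ⟨i, hi⟩).2 + 1)) :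
    ∃ P : List (List (A × ℝ)),
    (P.flatten = (u.map (fun p => (p.1, Int.fract p.2))) ∧
    (∀ b ∈ P, b ≠ []) ∧
    (∀ b ∈ P, (b.map Prod.snd).Chain' (· < ·)) ∧
    P.Chain' (fun b c => ∀ x ∈ (c.map Prod.snd).head?, ∀ y ∈ (b.map Prod.snd).getLast?, x ≤ y)) ∧
    (∀ d₁ ∈ ((u.map (fun p => (p.1, Int.fract p.2))).map Prod.snd).head?,
      (∀ p ∈ (u.map (fun p => (p.1, Int.fract p.2))), d₁ ≤ p.2) ∧
      (∀ p ∈ (u.map (fun p => (p.1, Int.fract p.2))), marked p.1 ↔ p.2 = d₁)) ∧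
    P.Chain' (fun b c => (b.map Prod.snd).Sublist (c.map Prod.snd)) := by
  obtain ⟨hhead, hchain, hmark, hplus⟩ := h
  by_cases hu : u = []
  · subst hu
    exact ⟨[], ⟨by simp, by simp, by simp, by simp [List.Chain']⟩, by simp, by simp [List.Chain']⟩
  set F : A × ℝ → A × ℝ := fun p => (p.1, Int.fract p.2) with hF
  set k : A × ℝ → ℤ := fun p => ⌊p.2⌋ with hk
  have hu2 : u.Pairwise (fun p q => p.2 < q.2) := by
    have := List.isChain_iff_pairwise.mp hchain
    rwa [List.pairwise_map] at this
  have hukey : u.Pairwise (fun p q => k p ≤ k q) :=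
    hu2.imp (fun h => Int.floor_le_floor h.le)
  obtain ⟨hfl, hne, heq, hpw⟩ := splitRuns_spec k u hukey
  set S := splitRuns k u with hSdef
  have hblocksub : ∀ b ∈ S, b.Sublist u := fun b hb => hfl ▸ List.sublist_flatten_of_mem hb
  have hblockchain : ∀ b ∈ S, (b.map (fun p => Int.fract p.2)).Chain' (· < ·) := by
    intro b hb
    rw [List.Chain', List.isChain_map]
    have hbc : b.Pairwise (fun p q => p.2 < q.2) :=
      List.Pairwise.sublist (hblocksub b hb) hu2
    exact (hbc.imp_of_mem (fun hp hq hlt =>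
      fract_lt_fract_of_floor_eq hlt (heq b hb _ hp _ hq))).isChain
  -- last element facts
  set qL := u.getLast hu with hqL
  have hqLmem : u.getLast? = some qL := List.getLast?_eq_getLast hu
  have hle_last : ∀ x ∈ u, x.2 ≤ qL.2 := by
    intro x hx
    obtain ⟨⟨ix, hix⟩, hgx⟩ := List.mem_iff_get.mp hx
    have hq : qL = u.get ⟨u.length - 1, by omega⟩ := by
      simp [hqL, List.getLast_eq_getElem, List.get_eq_getElem]
    by_cases hix' : ix = u.length - 1
    · subst hix'
      rw [← hgx, hq]
    · have hlt : ix < u.length - 1 := by omega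
      have := List.pairwise_iff_get.mp hu2 ⟨ix, hix⟩ ⟨u.length - 1, by omega⟩
        (by simp only [Fin.lt_def]; omega)
      rw [← hgx, hq]
      exact this.le
  -- key: consecutive blocks give sublists of fract-projections
  have hkey : ∀ i (hi : i + 1 < S.length),
      ((S.get ⟨i, by omega⟩).map (fun p => Int.fract p.2)).Sublist
        ((S.get ⟨i + 1, hi⟩).map (fun p => Int.fract p.2)) := by
    intro i hi
    have hi' : i < S.length := by omega
    set b := S.get ⟨i, hi'⟩ with hb
    set c := S.get ⟨i + 1, hi⟩ with hc
    have hbS : b ∈ S := S.get_mem _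
    have hcS : c ∈ S := S.get_mem _
    have hbc : ∀ p ∈ b, ∀ q ∈ c, k p < k q :=
      List.pairwise_iff_get.mp hpw ⟨i, hi'⟩ ⟨i + 1, hi⟩ (by simp [Fin.lt_def])
    refine sublist_of_subset_of_chain' ?_ (hblockchain b hbS) (hblockchain c hcS)
    intro x hx
    obtain ⟨p, hp, rfl⟩ := List.mem_map.mp hx
    have hpu : p ∈ u := (hblocksub b hbS).subset hp
    obtain ⟨⟨ipos, hipos⟩, hgetp⟩ := List.mem_iff_get.mp hpu
    obtain ⟨r, hr⟩ := List.exists_mem_of_ne_nil c (hne c hcS)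
    have hkpr : k p < k r := hbc p hp r hr
    have hplt : (u.get ⟨ipos, hipos⟩).2 < (⌊qL.2⌋ : ℝ) := by
      rw [hgetp]
      have h2 : r.2 ≤ qL.2 := hle_last r ((hblocksub c hcS).subset hr)
      have h3 : k r ≤ ⌊qL.2⌋ := Int.floor_le_floor h2
      have h5 : p.2 < (⌊p.2⌋ : ℝ) + 1 := Int.lt_floor_add_one p.2
      have h4 : ⌊p.2⌋ + 1 ≤ ⌊qL.2⌋ := by
        have : k p = ⌊p.2⌋ := rfl
        omega
      calc p.2 < (⌊p.2⌋ : ℝ) + 1 := h5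
        _ = ((⌊p.2⌋ + 1 : ℤ) : ℝ) := by push_cast; ring
        _ ≤ (⌊qL.2⌋ : ℝ) := by exact_mod_cast h4
    obtain ⟨j, hj, hij, hval⟩ := hplus qL hqLmem ipos hipos hplt
    set p' := u.get ⟨j, hj⟩ with hp'
    have hp'2 : p'.2 = p.2 + 1 := by rw [hval, hgetp]
    have hkp' : k p' = k p + 1 := by
      show ⌊p'.2⌋ = ⌊p.2⌋ + 1
      rw [hp'2]
      exact_mod_cast Int.floor_add_intCast p.2 1
    have hp'u : p' ∈ u := u.get_mem _
    rw [← hfl] at hp'u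
    obtain ⟨c', hc'S, hp'c'⟩ := List.mem_flatten.mp hp'u
    obtain ⟨⟨m, hm⟩, hgc'⟩ := List.mem_iff_get.mp hc'S
    have hmeq : m = i + 1 := by
      rcases lt_trichotomy m (i + 1) with hlt | heq' | hgt
      · exfalso
        have hle : k p' ≤ k p := by
          by_cases hmi : m = i
          · subst hmi
            have : c' = b := by rw [← hgc']
            rw [this] at hp'c'
            exact (heq b hbS p' hp'c' p hp).le
          · have hmi' : m < i := by omega
            have := List.pairwise_iff_get.mp hpw ⟨m, hm⟩ ⟨i, hi'⟩
              (by simp only [Fin.lt_def]; omega)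
            rw [hgc'] at this
            exact (this p' hp'c' p hp).le
        omega
      · exact heq'
      · exfalso
        have := List.pairwise_iff_get.mp hpw ⟨i + 1, hi⟩ ⟨m, hm⟩
          (by simp only [Fin.lt_def]; omega)
        rw [hgc'] at this
        have h6 : k r < k p' := this r hr p' hp'c'
        omega
    have hc'c : c' = c := by rw [← hgc', hc]; congr 1; exact Fin.ext hmeq
    rw [hc'c] at hp'c'
    have : Int.fract p'.2 = Int.fract p.2 := by rw [hp'2, Int.fract_add_one]
    rw [← this]
    exact List.mem_map_of_mem hp'c'
  -- assemble
  refine ⟨S.map (List.map F), ⟨?_, ?_, ?_, ?_⟩, ?_, ?_⟩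
  · rw [← List.map_flatten, hfl]
  · intro B hB
    obtain ⟨b, hb, rfl⟩ := List.mem_map.mp hB
    simpa using hne b hb
  · intro B hB
    obtain ⟨b, hb, rfl⟩ := List.mem_map.mp hB
    rw [List.map_map]
    exact hblockchain b hb
  · rw [List.Chain', List.isChain_map, List.isChain_iff_getElem]
    intro i hi
    have hi2 : i + 1 < S.length := by omega
    have hsub := hkey i hi2
    intro x hx y hy
    rw [List.map_map] at hx hy
    set L := (S.get ⟨i + 1, hi2⟩).map (fun p => Int.fract p.2) with hL
    have hx' : L.head? = some x := hx
    have hy' : y ∈ (S.get ⟨i, by omega⟩).map (fun p => Int.fract p.2) :=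
      List.mem_of_mem_getLast? hy
    have hyL : y ∈ L := hsub.subset hy'
    have hch : L.Chain' (· < ·) := hblockchain (S.get ⟨i + 1, hi2⟩) (S.get_mem ⟨i + 1, hi2⟩)
    obtain ⟨t, ht⟩ : ∃ t, L = x :: t := by
      match hLc : L with
      | [] => simp at hx'
      | z :: t =>
        simp only [List.head?_cons, Option.some.injEq] at hx'
        exact ⟨t, by rw [hx']⟩
    rw [ht] at hyL hch
    rcases List.mem_cons.mp hyL with rfl | hyt
    · exact le_refl _
    · exact ((List.pairwise_cons.mp (List.isChain_iff_pairwise.mp hch)).1 y hyt).le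
  · intro d₁ hd₁
    have hhd : d₁ = 0 := by
      have h0 : u.head? = some (u.head hu) := List.head?_eq_head hu
      have h1 : (u.head hu).2 = 0 := hhead _ (by rw [h0]; rfl)
      rw [List.map_map, List.head?_map, h0] at hd₁
      simp only [Option.map_some, Option.mem_def, Option.some.injEq] at hd₁
      rw [← hd₁]
      show Int.fract (u.head hu).2 = 0
      rw [h1, Int.fract_zero]
    subst hhd
    constructor
    · intro p hp
      obtain ⟨p', _, rfl⟩ := List.mem_map.mp hp
      exact Int.fract_nonneg _
    · intro p hp
      obtain ⟨p', hp', rfl⟩ := List.mem_map.mp hp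
      rw [hmark p' hp']
      show (∃ k : ℤ, p'.2 = (k : ℝ)) ↔ Int.fract p'.2 = 0
      exact fract_eq_zero_iff_exists.symm
  · rw [List.Chain', List.isChain_map, List.isChain_iff_getElem]
    intro i hi
    have hi2 : i + 1 < S.length := by omega
    have hsub := hkey i hi2
    rw [List.map_map, List.map_map]
    exact hsub

/-- Replacing each time stamp of a timed braid by its fractional part (data domain
`[0,1) ⊆ ℝ` with the usual order) yields a data braid. -/
theorem dataBraid_of_timedBraid {A : Type*} (marked : A → Prop) (u : List (A × ℝ))
    (h : IsTimedBraid marked u) :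
    IsDataBraid marked (u.map (fun p => (p.1, Int.fract p.2))) := by
  exact dataBraid_of_timedBraid_aux marked u h
end

section
/- The factors of the ordered partition of the data word of fractional parts of a timed braid correspond exactly to the maximal groups of positions sharing the same integer part: for a timed braid (a_1,t_1)...(a_n,t_n), positions i and i+1 lie in the same factor of the ordered partition of ({t_1},...,{t_n}) if and only if ⌊t_i⌋ = ⌊t_{i+1}⌋. -/
variable {A : Type*} {D : Type*} [LinearOrder D]

/-- Generic version of `startsFactor` for lists of lists over any type. -/
def sfAux {α : Type*} (P : List (List α)) (i : ℕ) : Prop :=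
  ∃ j < P.length, i = ((P.take j).map List.length).sum

lemma sfAux_cons {α : Type*} (b : List α) (P : List (List α)) (m : ℕ) :
    sfAux (b :: P) m ↔ m = 0 ∨ (b.length ≤ m ∧ sfAux P (m - b.length)) := by
  constructor
  · rintro ⟨j, hj, rfl⟩
    cases j with
    | zero => left; simp
    | succ j' =>
      right
      simp only [List.take_succ_cons, List.map_cons, List.sum_cons]
      refine ⟨Nat.le_add_right _ _, j', by simpa using hj, ?_⟩
      omega
  · rintro (rfl | ⟨hle, j, hj, hsum⟩)
    · exact ⟨0, by simp, by simp⟩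
    · refine ⟨j + 1, by simpa using hj, ?_⟩
      simp only [List.take_succ_cons, List.map_cons, List.sum_cons]
      omega

lemma sfAux_core {D : Type*} [LinearOrder D] :
    ∀ (P : List (List D)), (∀ b ∈ P, b ≠ []) → (∀ b ∈ P, b.Chain' (· < ·)) →
    P.Chain' (fun b c => ∀ x ∈ c.head?, ∀ y ∈ b.getLast?, x ≤ y) →
    ∀ i (hi : i + 1 < P.flatten.length),
    (¬ sfAux P (i + 1)) ↔
      P.flatten[i]'(Nat.lt_of_succ_lt hi) < P.flatten[i + 1]'hi
  | [], _, _, _ => by simp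
  | b :: P, hne, hinc, hmax => by
    intro i hi
    have hbne : b ≠ [] := hne b (by simp)
    have hflat : (b :: P).flatten = b ++ P.flatten := by simp
    have hlen : (b :: P).flatten.length = b.length + P.flatten.length := by simp
    rcases lt_trichotomy (i + 1) b.length with h1 | h1 | h1
    · -- both positions inside b
      have hget : (b :: P).flatten[i]'(Nat.lt_of_succ_lt hi) = b[i]'(by omega) := by
        simp only [List.flatten_cons]
        exact List.getElem_append_left (by omega)
      have hget' : (b :: P).flatten[i+1]'hi = b[i+1]'h1 := by
        simp only [List.flatten_cons]
        exact List.getElem_append_left h1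
      rw [hget, hget']
      constructor
      · intro _
        have := (List.isChain_iff_getElem.mp (hinc b (by simp))) i (by omega)
        simpa using this
      · intro _ hsf
        rcases (sfAux_cons b P (i+1)).mp hsf with h0 | ⟨hle, _⟩ <;> omega
    · -- position i+1 is the start of the second factor
      have hsf : sfAux (b :: P) (i + 1) := by
        rw [sfAux_cons]
        right
        refine ⟨le_of_eq h1.symm, ?_⟩
        have hflen : 0 < P.flatten.length := by omega
        have hPne : P ≠ [] := by rintro rfl; simp at hflen
        obtain ⟨c, P', rfl⟩ := List.exists_cons_of_ne_nil hPne
        exact ⟨0, by simp, by simp [h1]⟩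
      have hflen : 0 < P.flatten.length := by omega
      have hPne : P ≠ [] := by rintro rfl; simp at hflen
      obtain ⟨c, P', rfl⟩ := List.exists_cons_of_ne_nil hPne
      have hcne : c ≠ [] := hne c (by simp)
      -- value at i is the last of b, value at i+1 is head of c
      have hget : (b :: c :: P').flatten[i]'(Nat.lt_of_succ_lt hi)
          = b.getLast hbne := by
        simp only [List.flatten_cons]
        rw [List.getLast_eq_getElem]
        have hib : i = b.length - 1 := by omega
        rw [List.getElem_append_left (by omega : i < b.length)]
        congr 1
      have hget' : (b :: c :: P').flatten[i+1]'hi = c.head hcne := by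
        have hlp : 0 < ((c :: P').flatten).length := by
          simp [List.length_pos_iff.mpr hcne]
        simp only [List.flatten_cons]
        rw [List.getElem_append_right (by omega : b.length ≤ i + 1)]
        have h0 : i + 1 - b.length = 0 := by omega
        simp only [h0]
        rw [List.getElem_append_left (List.length_pos_iff.mpr hcne)]
        exact (List.head_eq_getElem hcne).symm
      have hle : c.head hcne ≤ b.getLast hbne := by
        have hR := (List.isChain_cons_cons.mp hmax).1
        exact hR _ (by simp [List.head?_eq_head hcne]) _
          (by simp [List.getLast?_eq_getLast hbne])
      rw [hget, hget']
      constructor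
      · intro hns; exact absurd hsf hns
      · intro hlt; exact absurd hlt (not_lt.mpr hle)
    · -- both positions inside P.flatten: use the recursive call
      have hne' : ∀ b ∈ P, b ≠ [] := fun c hc => hne c (by simp [hc])
      have hinc' : ∀ b ∈ P, b.Chain' (· < ·) := fun c hc => hinc c (by simp [hc])
      have hmax' := (List.isChain_cons.mp hmax).2
      have hi' : (i - b.length) + 1 < P.flatten.length := by omega
      have ih := sfAux_core P hne' hinc' hmax' (i - b.length) hi'
      have e1 : i - b.length + 1 = i + 1 - b.length := by omega
      have hget : (b :: P).flatten[i]'(Nat.lt_of_succ_lt hi)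
          = P.flatten[i - b.length]'(Nat.lt_of_succ_lt hi') := by
        simp only [List.flatten_cons]
        exact List.getElem_append_right (by omega)
      have hget' : (b :: P).flatten[i+1]'hi
          = P.flatten[i - b.length + 1]'hi' := by
        simp only [List.flatten_cons]
        rw [List.getElem_append_right (by omega : b.length ≤ i + 1)]
        congr 1
        omega
      rw [hget, hget', ← ih]
      rw [sfAux_cons]
      constructor
      · intro hns hsf
        exact hns (Or.inr ⟨by omega, by rwa [← e1] at *⟩)
      · intro hns hsf
        rcases hsf with h0 | ⟨_, hsf⟩
        · omega
        · rw [← e1] at hsf; exact hns hsf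

/-- For a timed braid, consecutive positions lie in the same factor of the ordered
partition of the word of fractional parts iff their time stamps have the same
integer part. -/
theorem sameFactor_iff_sameFloor {A : Type*} (marked : A → Prop) (u : List (A × ℝ))
    (h : IsTimedBraid marked u)
    (P : List (List (A × ℝ)))
    (hP : IsOrderedPartition P (u.map (fun p => (p.1, Int.fract p.2))))
    {i : ℕ} (hi : i + 1 < u.length) :
    (¬ startsFactor P (i + 1)) ↔
      ⌊(u.get ⟨i, Nat.lt_of_succ_lt hi⟩).2⌋ = ⌊(u.get ⟨i + 1, hi⟩).2⌋ := by
  obtain ⟨hflat, hne, hinc, hmax⟩ := hP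
  obtain ⟨_h0, hchain, _hmk, hclosure⟩ := h
  set Q : List (List ℝ) := P.map (List.map Prod.snd) with hQ
  -- transfer hypotheses to Q
  have hQflat : Q.flatten = u.map (fun p => Int.fract p.2) := by
    rw [hQ, ← List.map_flatten, hflat]
    simp [Function.comp]
  have hQne : ∀ b ∈ Q, b ≠ [] := by
    rintro b hb
    rw [hQ] at hb
    obtain ⟨c, hc, rfl⟩ := List.mem_map.mp hb
    simp [hne c hc]
  have hQinc : ∀ b ∈ Q, b.Chain' (· < ·) := by
    rintro b hb
    rw [hQ] at hb
    obtain ⟨c, hc, rfl⟩ := List.mem_map.mp hb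
    exact hinc c hc
  have hQmax : Q.Chain' (fun b c => ∀ x ∈ c.head?, ∀ y ∈ b.getLast?, x ≤ y) := by
    rw [hQ]
    exact (List.isChain_map _).2 hmax
  have hlenQ : Q.flatten.length = u.length := by
    rw [hQflat]; simp
  have hi' : i + 1 < Q.flatten.length := by omega
  have core := sfAux_core Q hQne hQinc hQmax i hi'
  -- startsFactor P m ↔ sfAux Q m
  have hcomp : (List.length ∘ List.map (Prod.snd : A × ℝ → ℝ)) = List.length :=
    funext fun l => List.length_map _
  have hsf_iff : ∀ m, startsFactor P m ↔ sfAux Q m := by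
    intro m
    unfold startsFactor sfAux
    rw [hQ]
    simp only [List.length_map, ← List.map_take, List.map_map, hcomp]
  -- the values
  have hv : ∀ (k : ℕ) (hk : k < Q.flatten.length),
      Q.flatten[k]'hk = Int.fract (u.get ⟨k, by omega⟩).2 := by
    intro k hk
    have : Q.flatten[k]'hk = (u.map (fun p => Int.fract p.2))[k]'(by simpa [hQflat] using hk) := by
      congr 1 <;> rw [hQflat]
    rw [this, List.getElem_map]
    rfl
  rw [hsf_iff, core, hv i (by omega), hv (i+1) hi']
  set ti := (u.get ⟨i, Nat.lt_of_succ_lt hi⟩).2 with hti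
  set tj := (u.get ⟨i + 1, hi⟩).2 with htj
  -- strict monotonicity of the time stamps
  have hpw : (u.map Prod.snd).Pairwise (· < ·) := List.isChain_iff_pairwise.mp hchain
  have hmono : ∀ (a b : ℕ) (ha : a < u.length) (hb : b < u.length), a < b →
      (u.get ⟨a, ha⟩).2 < (u.get ⟨b, hb⟩).2 := by
    intro a b ha hb hab
    have := List.pairwise_iff_get.mp hpw ⟨a, by simpa using ha⟩ ⟨b, by simpa using hb⟩ hab
    simpa using this
  have hmono' : ∀ (a b : ℕ) (ha : a < u.length) (hb : b < u.length), a ≤ b →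
      (u.get ⟨a, ha⟩).2 ≤ (u.get ⟨b, hb⟩).2 := by
    intro a b ha hb hab
    rcases Nat.eq_or_lt_of_le hab with rfl | hl
    · exact le_rfl
    · exact (hmono a b ha hb hl).le
  have hlt : ti < tj := hmono i (i+1) (Nat.lt_of_succ_lt hi) hi (by omega)
  constructor
  · -- fract increases ⟹ same floor
    intro hfr
    by_contra hne'
    have hfl : ⌊ti⌋ < ⌊tj⌋ := lt_of_le_of_ne (Int.floor_le_floor hlt.le) hne'
    -- use the closure property
    have hune : u ≠ [] := by intro h0; rw [h0] at hi; simp at hi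
    have hq : u.getLast hune ∈ u.getLast? := by
      simp [List.getLast?_eq_getLast hune]
    have hlast : u.getLast hune = u.get ⟨u.length - 1, by omega⟩ := by
      rw [List.getLast_eq_getElem]; rfl
    have hlastt : tj ≤ (u.getLast hune).2 := by
      rw [hlast]
      exact hmono' (i+1) (u.length - 1) hi (by omega) (by omega)
    have hfloorle : ⌊tj⌋ ≤ ⌊(u.getLast hune).2⌋ := Int.floor_le_floor hlastt
    have hcond : ti < (⌊(u.getLast hune).2⌋ : ℝ) := by
      have h1 : ti < (⌊ti⌋ : ℝ) + 1 := Int.lt_floor_add_one ti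
      have h2 : (⌊ti⌋ : ℝ) + 1 ≤ (⌊(u.getLast hune).2⌋ : ℝ) := by
        exact_mod_cast by omega
      linarith
    obtain ⟨j, hj, hij, hjt⟩ := hclosure _ hq i (Nat.lt_of_succ_lt hi) hcond
    have htjle : tj ≤ ti + 1 := by
      rw [← hjt]
      exact hmono' (i+1) j hi hj (by omega)
    -- fract tj ≤ fract ti, contradiction
    have hkey : Int.fract tj ≤ Int.fract ti := by
      have hc : (⌊ti⌋ : ℝ) + 1 ≤ (⌊tj⌋ : ℝ) := by exact_mod_cast by omega
      simp only [Int.fract]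
      linarith
    linarith
  · -- same floor ⟹ fract increases
    intro hfl
    simp only [Int.fract, hfl]
    linarith
end

section
/- Composing the braid transformations returns to the original word up to isomorphism: starting from a timed braid w, taking fractional parts to obtain a data braid, and then converting this data braid back into a timed braid via any order-preserving injection f : D' → [0,1) with f(d_1) = 0 (where D' is the set of occurring data) and integer parts counting preceding factor-ends, yields a timed word equal to g(w) for some time isomorphism g (an order-preserving bijection of [0,1)), i.e., each resulting time stamp has the same integer part as the corresponding original one and fractional parts related by a single order-preserving bijection of [0,1). -/
variable {A : Type*} {D : Type*} [LinearOrder D]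

private lemma timed_mono {A : Type*} {marked : A → Prop} {u : List (A × ℝ)}
    (h : IsTimedBraid marked u) {i j : ℕ} (hi : i < u.length) (hj : j < u.length)
    (hij : i < j) : (u[i]'hi).2 < (u[j]'hj).2 := by
  have hp := (List.isChain_iff_pairwise).1 h.2.1
  rw [List.pairwise_iff_getElem] at hp
  have := hp i j (by simpa using hi) (by simpa using hj) hij
  simpa using this

private lemma timed_mono_le {A : Type*} {marked : A → Prop} {u : List (A × ℝ)}
    (h : IsTimedBraid marked u) {i j : ℕ} (hi : i < u.length) (hj : j < u.length)
    (hij : i ≤ j) : (u[i]'hi).2 ≤ (u[j]'hj).2 := by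
  rcases eq_or_lt_of_le hij with rfl | hlt
  · exact le_refl _
  · exact le_of_lt (timed_mono h hi hj hlt)

private lemma timed_floor_succ {A : Type*} {marked : A → Prop} {u : List (A × ℝ)}
    (h : IsTimedBraid marked u) {i : ℕ} (hi1 : i + 1 < u.length) :
    (Int.fract (u[i]'(by omega)).2 < Int.fract (u[i+1]'hi1).2 ∧
      ⌊(u[i+1]'hi1).2⌋ = ⌊(u[i]'(by omega)).2⌋) ∨
    (Int.fract (u[i+1]'hi1).2 ≤ Int.fract (u[i]'(by omega)).2 ∧
      ⌊(u[i+1]'hi1).2⌋ = ⌊(u[i]'(by omega)).2⌋ + 1) := by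
  have hi : i < u.length := by omega
  have hne : u ≠ [] := List.ne_nil_of_length_pos (by omega)
  have hq : u.getLast hne ∈ u.getLast? := by
    rw [List.getLast?_eq_getLast hne]; rfl
  have hlast : ∀ k (hk : k < u.length), (u[k]'hk).2 ≤ (u.getLast hne).2 := by
    intro k hk
    rw [List.getLast_eq_getElem hne]
    exact timed_mono_le h hk (by omega) (by omega)
  have braid := h.2.2.2 (u.getLast hne) hq
  set t0 : ℝ := (u[i]'hi).2 with ht0
  set t1 : ℝ := (u[i+1]'hi1).2 with ht1
  have htlt : t0 < t1 := timed_mono h hi hi1 (by omega)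
  have hfr0 : t0 = (⌊t0⌋ : ℝ) + Int.fract t0 := by rw [Int.floor_add_fract]
  have hfr1 : t1 = (⌊t1⌋ : ℝ) + Int.fract t1 := by rw [Int.floor_add_fract]
  have hfr0' : Int.fract t0 < 1 := Int.fract_lt_one _
  have hfr1' : 0 ≤ Int.fract t1 := Int.fract_nonneg _
  have hKlast : ⌊t1⌋ ≤ ⌊(u.getLast hne).2⌋ := Int.floor_le_floor (hlast (i+1) hi1)
  -- helper producing contradiction given t0 < ⌊last⌋ and (t0+1) < t1
  have hcontra : (t0 < (⌊(u.getLast hne).2⌋ : ℝ)) → (t0 + 1 < t1) → False := by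
    intro hA hB
    obtain ⟨j, hj, hij, heq⟩ := braid i hi (by simpa using hA)
    simp only [List.get_eq_getElem] at heq
    have hjt : (u[j]'hj).2 < t1 := by rw [heq]; simpa using hB
    have hji : j < i + 1 := by
      by_contra hc
      push_neg at hc
      have := timed_mono_le h hi1 hj hc
      simp only [← ht1] at this
      linarith
    omega
  rcases lt_or_ge (Int.fract t0) (Int.fract t1) with hf | hf
  · left
    refine ⟨hf, ?_⟩
    have hk : ⌊t0⌋ ≤ ⌊t1⌋ := Int.floor_le_floor (le_of_lt htlt)
    by_contra hne'
    have hk1 : ⌊t0⌋ + 1 ≤ ⌊t1⌋ := by omega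
    have hk1R : (⌊t0⌋ : ℝ) + 1 ≤ (⌊t1⌋ : ℝ) := by exact_mod_cast hk1
    have hKR : (⌊t1⌋ : ℝ) ≤ (⌊(u.getLast hne).2⌋ : ℝ) := by exact_mod_cast hKlast
    exact hcontra (by linarith) (by linarith)
  · right
    refine ⟨hf, ?_⟩
    have hk : ⌊t0⌋ < ⌊t1⌋ := by
      have : (⌊t0⌋ : ℝ) < (⌊t1⌋ : ℝ) := by linarith
      exact_mod_cast this
    by_contra hne'
    have hk2 : ⌊t0⌋ + 2 ≤ ⌊t1⌋ := by omega
    have hk2R : (⌊t0⌋ : ℝ) + 2 ≤ (⌊t1⌋ : ℝ) := by exact_mod_cast hk2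
    have hKR : (⌊t1⌋ : ℝ) ≤ (⌊(u.getLast hne).2⌋ : ℝ) := by exact_mod_cast hKlast
    have hKt1 : (⌊t1⌋ : ℝ) ≤ t1 := Int.floor_le _
    exact hcontra (by linarith) (by linarith)


private def pSum {α : Type*} (P : List (List α)) (j : ℕ) : ℕ := ((P.map List.length).take j).sum

private lemma pSum_succ {α : Type*} (P : List (List α)) {j : ℕ} (hj : j < P.length) :
    pSum P (j+1) = pSum P j + (P[j]'hj).length := by
  unfold pSum
  rw [List.take_succ, List.sum_append]
  have : (P.map List.length)[j]? = some (P[j]'hj).length := by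
    rw [List.getElem?_eq_getElem (by simpa using hj)]
    simp
  rw [this]
  simp

private lemma pSum_mono {α : Type*} (P : List (List α)) {j k : ℕ} (hjk : j ≤ k) :
    pSum P j ≤ pSum P k := List.monotone_sum_take _ hjk

private lemma pSum_strict {α : Type*} (P : List (List α)) (hnil : ∀ b ∈ P, b ≠ [])
    {j k : ℕ} (hjk : j < k) (hk : j < P.length) : pSum P j < pSum P k := by
  have h1 : 0 < (P[j]'hk).length :=
    List.length_pos_iff.2 (hnil _ (List.getElem_mem hk))
  calc pSum P j < pSum P j + (P[j]'hk).length := by omega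
    _ = pSum P (j+1) := (pSum_succ P hk).symm
    _ ≤ pSum P k := pSum_mono P hjk

private lemma pSum_length {α : Type*} (P : List (List α)) : pSum P P.length = P.flatten.length := by
  unfold pSum
  rw [List.length_flatten, ← List.length_map (f := List.length), List.take_length]

-- the factor index of position i
private def fIdx {α : Type*} (P : List (List α)) (i : ℕ) : ℕ :=
  Nat.findGreatest (fun m => pSum P m ≤ i) P.length

private lemma fIdx_spec {α : Type*} (P : List (List α)) (hnil : ∀ b ∈ P, b ≠ [])
    {i : ℕ} (hi : i < P.flatten.length) :
    pSum P (fIdx P i) ≤ i ∧ i < pSum P (fIdx P i + 1) ∧ fIdx P i < P.length := by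
  classical
  have h0 : pSum P 0 ≤ i := by simp [pSum]
  have h1 : pSum P (fIdx P i) ≤ i :=
    Nat.findGreatest_spec (P := fun m => pSum P m ≤ i) (Nat.zero_le _) h0
  have hle : fIdx P i ≤ P.length := Nat.findGreatest_le _
  have hlt : fIdx P i < P.length := by
    rcases eq_or_lt_of_le hle with heq | hlt
    · exfalso
      rw [heq, pSum_length] at h1
      omega
    · exact hlt
  refine ⟨h1, ?_, hlt⟩
  by_contra hc
  push_neg at hc
  rcases le_or_gt (fIdx P i + 1) P.length with hle2 | hgt
  · exact Nat.findGreatest_is_greatest (P := fun m => pSum P m ≤ i)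
      (Nat.lt_succ_self _) hle2 hc
  · omega
private lemma fIdx_unique {α : Type*} (P : List (List α)) (hnil : ∀ b ∈ P, b ≠ [])
    {i m : ℕ} (hi : i < P.flatten.length) (hm : m < P.length)
    (h1 : pSum P m ≤ i) (h2 : i < pSum P (m+1)) : m = fIdx P i := by
  obtain ⟨g1, g2, g3⟩ := fIdx_spec P hnil hi
  rcases lt_trichotomy m (fIdx P i) with hlt | heq | hgt
  · exfalso
    have := pSum_mono P (show m + 1 ≤ fIdx P i by omega)
    omega
  · exact heq
  · exfalso
    have := pSum_mono P (show fIdx P i + 1 ≤ m by omega)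
    omega

private lemma countP_range_lt {m n : ℕ} :
    (List.range n).countP (fun j => decide (j < m)) = min m n := by
  induction n with
  | zero => simp
  | succ n ih =>
    rw [List.range_succ, List.countP_append, ih]
    by_cases h : n < m
    · simp only [List.countP_cons, List.countP_nil]
      rw [if_pos (by simpa using h)]
      omega
    · simp only [List.countP_cons, List.countP_nil]
      rw [if_neg (by simpa using h)]
      omega

private lemma factorsEndedBefore_eq_fIdx {α : Type*} (P : List (List α))
    (hnil : ∀ b ∈ P, b ≠ []) {i : ℕ} (hi : i < P.flatten.length) :
    factorsEndedBefore P i = fIdx P i := by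
  obtain ⟨g1, g2, g3⟩ := fIdx_spec P hnil hi
  unfold factorsEndedBefore
  have hcong : ∀ j ∈ List.range P.length,
      (decide (((P.take (j+1)).map List.length).sum ≤ i)) = true ↔ (decide (j < fIdx P i)) = true := by
    intro j hj
    rw [List.mem_range] at hj
    have hps : ((P.take (j+1)).map List.length).sum = pSum P (j+1) := by
      unfold pSum; rw [List.map_take]
    simp only [decide_eq_true_eq, hps]
    constructor
    · intro hle
      by_contra hc
      push_neg at hc
      have : pSum P (fIdx P i + 1) ≤ pSum P (j + 1) := pSum_mono P (by omega)
      omega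
    · intro hlt
      have : pSum P (j+1) ≤ pSum P (fIdx P i) := pSum_mono P (by omega)
      omega
  rw [List.countP_congr hcong, countP_range_lt]
  omega

-- getElem of flatten within a factor
private lemma flatten_getElem {α : Type*} (P : List (List α)) {m k : ℕ} (hm : m < P.length)
    (hk : k < (P[m]'hm).length) (htot : pSum P m + k < P.flatten.length) :
    P.flatten[pSum P m + k]'htot = (P[m]'hm)[k]'hk := by
  have hdrop : P.flatten.drop (pSum P m) = (P.drop m).flatten := List.drop_sum_flatten P m
  have hlen : k < (P.flatten.drop (pSum P m)).length := by
    rw [List.length_drop]; omega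
  have h1 : P.flatten[pSum P m + k]'htot = (P.flatten.drop (pSum P m))[k]'hlen := by
    rw [List.getElem_drop]
  rw [h1]
  have h2 : (P.drop m) = (P[m]'hm) :: P.drop (m+1) := List.drop_eq_getElem_cons hm
  have hlen2 : k < ((P.drop m).flatten).length := by rw [← hdrop]; exact hlen
  have h3 : (P.flatten.drop (pSum P m))[k]'hlen = ((P.drop m).flatten)[k]'hlen2 := by
    congr 1
  rw [h3]
  have h4 : (P.drop m).flatten = (P[m]'hm) ++ (P.drop (m+1)).flatten := by
    rw [h2, List.flatten_cons]
  simp only [h4]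
  exact List.getElem_append_left hk

/-- Part B main step -/
private lemma partB_step (P : List (List (A × D))) (w : List (A × D))
    (hP : IsOrderedPartition P w) {i : ℕ} (hi1 : i + 1 < w.length) :
    ((w[i]'(by omega)).2 < (w[i+1]'hi1).2 ∧
      factorsEndedBefore P (i+1) = factorsEndedBefore P i) ∨
    ((w[i+1]'hi1).2 ≤ (w[i]'(by omega)).2 ∧
      factorsEndedBefore P (i+1) = factorsEndedBefore P i + 1) := by
  obtain ⟨hflat, hnil, hchain, hbdry⟩ := hP
  subst hflat
  have hi : i < P.flatten.length := by omega
  obtain ⟨g1, g2, g3⟩ := fIdx_spec P hnil hi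
  set m := fIdx P i with hm
  have hSm1 : pSum P (m+1) = pSum P m + (P[m]'g3).length := pSum_succ P g3
  have hwi : P.flatten[i]'hi = (P[m]'g3)[i - pSum P m]'(by omega) := by
    have := flatten_getElem P g3 (k := i - pSum P m) (by omega) (by omega)
    rw [← this]
    congr 1
    omega
  rcases lt_or_eq_of_le (Nat.succ_le_of_lt g2) with hlt | heq
  · -- i+1 still in factor m
    left
    have hm1 : m = fIdx P (i+1) := fIdx_unique P hnil hi1 g3 (by omega) (by omega)
    have hwi1 : P.flatten[i+1]'hi1 = (P[m]'g3)[(i - pSum P m) + 1]'(by omega) := by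
      have := flatten_getElem P g3 (k := (i - pSum P m) + 1) (by omega) (by omega)
      rw [← this]
      congr 1
      omega
    constructor
    · rw [hwi, hwi1]
      have hch := hchain (P[m]'g3) (List.getElem_mem g3)
      rw [show @List.Chain' = @List.IsChain from rfl, List.isChain_iff_getElem] at hch
      have hlen : i - pSum P m < ((P[m]'g3).map Prod.snd).length - 1 := by
        rw [List.length_map]; omega
      have := hch (i - pSum P m) (by omega)
      simp only [List.get_eq_getElem, List.getElem_map] at this
      exact this
    · rw [factorsEndedBefore_eq_fIdx P hnil hi, factorsEndedBefore_eq_fIdx P hnil hi1, ← hm1, hm]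
  · -- i+1 = pSum P (m+1): new factor starts
    right
    have hm1lt : m + 1 < P.length := by
      by_contra hc
      have hmeq : m + 1 = P.length := by omega
      have hfl := pSum_length P
      rw [← hmeq] at hfl
      omega
    have hSm2 : pSum P (m+1+1) = pSum P (m+1) + (P[m+1]'hm1lt).length := pSum_succ P hm1lt
    have hnil1 : (P[m+1]'hm1lt) ≠ [] := hnil _ (List.getElem_mem hm1lt)
    have hlen1 : 0 < (P[m+1]'hm1lt).length := List.length_pos_iff.2 hnil1
    have hm1 : m + 1 = fIdx P (i+1) := by
      apply fIdx_unique P hnil hi1 hm1lt (by omega) (by omega)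
    have hwi1 : P.flatten[i+1]'hi1 = (P[m+1]'hm1lt)[0]'hlen1 := by
      have := flatten_getElem P hm1lt (k := 0) hlen1 (by omega)
      rw [← this]
      congr 1
    have hwi' : P.flatten[i]'hi = (P[m]'g3)[(P[m]'g3).length - 1]'(by omega) := by
      have := flatten_getElem P g3 (k := (P[m]'g3).length - 1) (by omega) (by omega)
      rw [← this]
      congr 1
      omega
    constructor
    · rw [hwi', hwi1]
      rw [show @List.Chain' = @List.IsChain from rfl, List.isChain_iff_getElem] at hbdry
      have hblen : m < P.length - 1 := by omega
      have hb := hbdry m (by omega)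
      have hnil0 : (P[m]'g3) ≠ [] := hnil _ (List.getElem_mem g3)
      have hh : ((P[m+1]'hm1lt).map Prod.snd).head? = some ((P[m+1]'hm1lt)[0]'hlen1).2 := by
        have hne : (P[m+1]'hm1lt).map Prod.snd ≠ [] := by simpa using hnil1
        rw [List.head?_eq_head hne, List.head_eq_getElem]
        simp
      have hl : ((P[m]'g3).map Prod.snd).getLast? =
          some (((P[m]'g3)[(P[m]'g3).length - 1]'(by omega)).2) := by
        have hne : (P[m]'g3).map Prod.snd ≠ [] := by simpa using hnil0
        rw [List.getLast?_eq_getLast hne, List.getLast_eq_getElem]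
        simp only [List.getElem_map, List.length_map]
      have := hb _ (by rw [hh]; rfl) _ (by rw [hl]; rfl)
      exact this
    · rw [factorsEndedBefore_eq_fIdx P hnil hi, factorsEndedBefore_eq_fIdx P hnil hi1, ← hm1, hm]

private lemma partB_zero (P : List (List (A × D))) (w : List (A × D))
    (hP : IsOrderedPartition P w) (hw : 0 < w.length) : factorsEndedBefore P 0 = 0 := by
  obtain ⟨hflat, hnil, -, -⟩ := hP
  subst hflat
  rw [factorsEndedBefore_eq_fIdx P hnil hw]
  have h0 : 0 < P.length := by
    by_contra hc
    have : P = [] := by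
      cases P
      · rfl
      · simp at hc
    subst this
    simp at hw
  refine (fIdx_unique P hnil hw h0 (by simp [pSum]) ?_).symm
  have := pSum_succ P h0
  have := List.length_pos_iff.2 (hnil _ (List.getElem_mem h0))
  omega


open Finset in
private lemma extend_to_bijOn (T : Finset ℝ) (hT0 : (0:ℝ) ∈ T)
    (hT : ∀ s ∈ T, s ∈ Set.Ico (0:ℝ) 1)
    (f : ℝ → ℝ) (hf : ∀ s ∈ T, f s ∈ Set.Ico (0:ℝ) 1) (hf0 : f 0 = 0)
    (hmono : ∀ s ∈ T, ∀ t ∈ T, s < t → f s < f t) :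
    ∃ g : ℝ → ℝ, Set.BijOn g (Set.Ico 0 1) (Set.Ico 0 1) ∧
      StrictMonoOn g (Set.Ico 0 1) ∧ ∀ s ∈ T, g s = f s := by
  classical
  set T' : Finset ℝ := insert 1 T with hT'
  set F : ℝ → ℝ := fun x => if x = (1:ℝ) then 1 else f x with hF
  have h1T : (1:ℝ) ∉ T := fun h1 => absurd (hT 1 h1).2 (lt_irrefl 1)
  have hFT : ∀ s ∈ T, F s = f s := by
    intro s hs
    have : s ≠ 1 := fun h => h1T (h ▸ hs)
    simp [hF, this]
  have hF1 : F 1 = 1 := by simp [hF]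
  have hFmem : ∀ s ∈ T', 0 ≤ F s ∧ F s ≤ 1 := by
    intro s hs
    rcases Finset.mem_insert.1 hs with rfl | hs
    · simp [hF1]
    · rw [hFT s hs]; exact ⟨(hf s hs).1, le_of_lt (hf s hs).2⟩
  have hFmono : ∀ s ∈ T', ∀ t ∈ T', s < t → F s < F t := by
    intro s hs t ht hst
    rcases Finset.mem_insert.1 hs with rfl | hs
    · rcases Finset.mem_insert.1 ht with rfl | ht
      · exact absurd hst (lt_irrefl 1)
      · exact absurd ((hT t ht).2.trans hst) (lt_irrefl _)
    · rcases Finset.mem_insert.1 ht with rfl | ht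
      · rw [hFT s hs, hF1]; exact (hf s hs).2
      · rw [hFT s hs, hFT t ht]; exact hmono s hs t ht hst
  have hFmono' : ∀ s ∈ T', ∀ t ∈ T', s ≤ t → F s ≤ F t := by
    intro s hs t ht hst
    rcases eq_or_lt_of_le hst with rfl | h
    · exact le_refl _
    · exact le_of_lt (hFmono s hs t ht h)
  set a : ℝ → ℝ := fun x =>
    if h : (T.filter (· ≤ x)).Nonempty then (T.filter (· ≤ x)).max' h else 0 with ha
  set b : ℝ → ℝ := fun x =>
    if h : (T'.filter (x < ·)).Nonempty then (T'.filter (x < ·)).min' h else 1 with hb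
  have haNe : ∀ x : ℝ, 0 ≤ x → (T.filter (· ≤ x)).Nonempty := by
    intro x hx; exact ⟨0, Finset.mem_filter.2 ⟨hT0, by simpa using hx⟩⟩
  have hbNe : ∀ x : ℝ, x < 1 → (T'.filter (x < ·)).Nonempty := by
    intro x hx; exact ⟨1, Finset.mem_filter.2 ⟨Finset.mem_insert_self _ _, by simpa using hx⟩⟩
  have haP : ∀ x : ℝ, 0 ≤ x → a x ∈ T ∧ a x ≤ x := by
    intro x hx
    have h := haNe x hx
    have := Finset.max'_mem _ h
    rw [Finset.mem_filter] at this
    simp only [ha, dif_pos h]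
    exact ⟨this.1, by simpa using this.2⟩
  have haMax : ∀ x : ℝ, 0 ≤ x → ∀ s ∈ T, s ≤ x → s ≤ a x := by
    intro x hx s hs hsx
    have h := haNe x hx
    simp only [ha, dif_pos h]
    exact Finset.le_max' _ s (Finset.mem_filter.2 ⟨hs, by simpa using hsx⟩)
  have hbP : ∀ x : ℝ, x < 1 → b x ∈ T' ∧ x < b x := by
    intro x hx
    have h := hbNe x hx
    have := Finset.min'_mem _ h
    rw [Finset.mem_filter] at this
    simp only [hb, dif_pos h]
    exact ⟨this.1, by simpa using this.2⟩
  have hbMin : ∀ x : ℝ, x < 1 → ∀ s ∈ T', x < s → b x ≤ s := by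
    intro x hx s hs hsx
    have h := hbNe x hx
    simp only [hb, dif_pos h]
    exact Finset.min'_le _ s (Finset.mem_filter.2 ⟨hs, by simpa using hsx⟩)
  set g : ℝ → ℝ := fun x => F (a x) + (x - a x) * (F (b x) - F (a x)) / (b x - a x) with hg
  -- basic facts for x ∈ Ico 0 1
  have key : ∀ x ∈ Set.Ico (0:ℝ) 1,
      a x ∈ T ∧ a x ≤ x ∧ b x ∈ T' ∧ x < b x ∧ F (a x) < F (b x) := by
    intro x hx
    obtain ⟨hx0, hx1⟩ := hx
    obtain ⟨h1, h2⟩ := haP x hx0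
    obtain ⟨h3, h4⟩ := hbP x hx1
    exact ⟨h1, h2, h3, h4, hFmono _ (Finset.mem_insert_of_mem h1) _ h3 (lt_of_le_of_lt h2 h4)⟩
  have gbound : ∀ x ∈ Set.Ico (0:ℝ) 1, F (a x) ≤ g x ∧ g x < F (b x) := by
    intro x hx
    obtain ⟨h1, h2, h3, h4, h5⟩ := key x hx
    have hd : (0:ℝ) < b x - a x := by linarith [lt_of_le_of_lt h2 h4]
    have he : (0:ℝ) < F (b x) - F (a x) := by linarith
    constructor
    · have : 0 ≤ (x - a x) * (F (b x) - F (a x)) / (b x - a x) :=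
        div_nonneg (mul_nonneg (by linarith) (by linarith)) (le_of_lt hd)
      simp only [hg]; linarith
    · simp only [hg]
      have hlt : (x - a x) * (F (b x) - F (a x)) / (b x - a x) < F (b x) - F (a x) := by
        rw [div_lt_iff₀ hd]; nlinarith
      linarith
  have gmapsto : ∀ x ∈ Set.Ico (0:ℝ) 1, g x ∈ Set.Ico (0:ℝ) 1 := by
    intro x hx
    obtain ⟨h1, h2, h3, h4, h5⟩ := key x hx
    obtain ⟨g1, g2⟩ := gbound x hx
    constructor
    · exact le_trans (hFmem _ (Finset.mem_insert_of_mem h1)).1 g1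
    · exact lt_of_lt_of_le g2 (hFmem _ h3).2
  have gval : ∀ s ∈ T, g s = f s := by
    intro s hs
    have hsI := hT s hs
    have has : a s = s :=
      le_antisymm (haP s hsI.1).2 (haMax s hsI.1 s hs (le_refl s))
    simp only [hg, has, sub_self, zero_mul, zero_div, add_zero]
    exact hFT s hs
  -- characterization of (a x, b x) from the gap property
  have hchar : ∀ (x s₀ s₁ : ℝ), s₀ ∈ T → s₁ ∈ T' → s₀ ≤ x → x < s₁ →
      (∀ t ∈ T', s₀ < t → s₁ ≤ t) → x ∈ Set.Ico (0:ℝ) 1 → a x = s₀ ∧ b x = s₁ := by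
    intro x s₀ s₁ hs₀ hs₁ h0x hx1 hgap hx
    have hx0 : (0:ℝ) ≤ x := hx.1
    have hx1' : x < 1 := hx.2
    obtain ⟨ha1, ha2⟩ := haP x hx0
    obtain ⟨hb1, hb2⟩ := hbP x hx1'
    constructor
    · refine le_antisymm ?_ (haMax x hx0 s₀ hs₀ h0x)
      by_contra hlt
      push_neg at hlt
      have := hgap (a x) (Finset.mem_insert_of_mem ha1) hlt
      linarith
    · refine le_antisymm (hbMin x hx1' s₁ hs₁ hx1) ?_
      by_contra hlt
      push_neg at hlt
      have := hgap (b x) hb1 (lt_of_le_of_lt h0x hb2)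
      linarith
  have hgapx : ∀ x ∈ Set.Ico (0:ℝ) 1, ∀ t ∈ T', a x < t → b x ≤ t := by
    intro x hx t ht hat
    rcases le_or_gt t x with h | h
    · exfalso
      rcases Finset.mem_insert.1 ht with rfl | ht'
      · linarith [hx.2]
      · linarith [haMax x hx.1 t ht' h]
    · exact hbMin x hx.2 t ht h
  -- strict monotonicity
  have gmono : StrictMonoOn g (Set.Ico (0:ℝ) 1) := by
    intro x hx y hy hxy
    obtain ⟨hax, haxx, hbx, hbxx, hFx⟩ := key x hx
    obtain ⟨hay, hayy, hby, hbyy, hFy⟩ := key y hy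
    by_cases hcase : a y ≤ x
    · have haeq : a x = a y :=
        le_antisymm (haMax y hy.1 (a x) hax (le_of_lt (lt_of_le_of_lt haxx hxy)))
          (haMax x hx.1 (a y) hay hcase)
      by_cases hcase2 : y < b x
      · have hbeq : b x = b y :=
          le_antisymm (hbMin x hx.2 (b y) hby (lt_trans hxy hbyy))
            (hbMin y hy.2 (b x) hbx hcase2)
        have hd : (0:ℝ) < b x - a x := by linarith [lt_of_le_of_lt haxx hbxx]
        have he : (0:ℝ) < F (b x) - F (a x) := by linarith
        simp only [hg, ← haeq, ← hbeq]
        have hnum : (x - a x) * (F (b x) - F (a x)) < (y - a x) * (F (b x) - F (a x)) :=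
          mul_lt_mul_of_pos_right (by linarith) he
        have := div_lt_div_of_pos_right hnum hd
        linarith
      · push_neg at hcase2
        have hbx1 : b x ∈ T := by
          rcases Finset.mem_insert.1 hbx with h1 | h
          · exfalso; linarith [hy.2, h1 ▸ hcase2]
          · exact h
        have hle : b x ≤ a y := haMax y hy.1 (b x) hbx1 hcase2
        have h1 : g x < F (b x) := (gbound x hx).2
        have h2 : F (b x) ≤ F (a y) :=
          hFmono' _ (Finset.mem_insert_of_mem hbx1) _ (Finset.mem_insert_of_mem hay) hle
        have h3 : F (a y) ≤ g y := (gbound y hy).1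
        linarith
    · push_neg at hcase
      have hle : b x ≤ a y := hbMin x hx.2 (a y) (Finset.mem_insert_of_mem hay) hcase
      have h1 : g x < F (b x) := (gbound x hx).2
      have h2 : F (b x) ≤ F (a y) :=
        hFmono' _ hbx _ (Finset.mem_insert_of_mem hay) hle
      have h3 : F (a y) ≤ g y := (gbound y hy).1
      linarith
  -- surjectivity
  have gsurj : Set.SurjOn g (Set.Ico (0:ℝ) 1) (Set.Ico (0:ℝ) 1) := by
    intro v hv
    obtain ⟨hv0, hv1⟩ := hv
    have hANe : (T.filter (fun s => f s ≤ v)).Nonempty :=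
      ⟨0, Finset.mem_filter.2 ⟨hT0, by simp [hf0, hv0]⟩⟩
    have hBNe : (T'.filter (fun s => v < F s)).Nonempty :=
      ⟨1, Finset.mem_filter.2 ⟨Finset.mem_insert_self _ _, by simp [hF1, hv1]⟩⟩
    obtain ⟨s₀, hs₀def⟩ : ∃ y, y = (T.filter (fun s => f s ≤ v)).max' hANe := ⟨_, rfl⟩
    obtain ⟨s₁, hs₁def⟩ : ∃ y, y = (T'.filter (fun s => v < F s)).min' hBNe := ⟨_, rfl⟩
    have hs₀ : s₀ ∈ T ∧ f s₀ ≤ v := by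
      have := Finset.max'_mem _ hANe
      rw [Finset.mem_filter, ← hs₀def] at this
      exact ⟨this.1, by simpa using this.2⟩
    have hs₁ : s₁ ∈ T' ∧ v < F s₁ := by
      have := Finset.min'_mem _ hBNe
      rw [Finset.mem_filter, ← hs₁def] at this
      exact ⟨this.1, by simpa using this.2⟩
    have hFs₀ : F s₀ = f s₀ := hFT _ hs₀.1
    have hs₀s₁ : s₀ < s₁ := by
      by_contra hle
      push_neg at hle
      have := hFmono' _ hs₁.1 _ (Finset.mem_insert_of_mem hs₀.1) hle
      rw [hFs₀] at this
      linarith [hs₀.2, hs₁.2]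
    have hgap : ∀ t ∈ T', s₀ < t → s₁ ≤ t := by
      intro t ht h0t
      by_cases hft : v < F t
      · rw [hs₁def]
        exact Finset.min'_le _ t (Finset.mem_filter.2 ⟨ht, by simpa using hft⟩)
      · push_neg at hft
        exfalso
        rcases Finset.mem_insert.1 ht with rfl | ht'
        · rw [hF1] at hft; linarith
        · rw [hFT t ht'] at hft
          have := Finset.le_max' (T.filter (fun s => f s ≤ v)) t (Finset.mem_filter.2 ⟨ht', by simpa using hft⟩)
          rw [← hs₀def] at this
          linarith
    have hd : (0:ℝ) < s₁ - s₀ := by linarith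
    have he : (0:ℝ) < F s₁ - f s₀ := by linarith [hs₀.2, hs₁.2]
    obtain ⟨x, hxdef⟩ : ∃ y : ℝ, y = s₀ + (v - f s₀) * (s₁ - s₀) / (F s₁ - f s₀) := ⟨_, rfl⟩
    have hx0 : s₀ ≤ x := by
      have : 0 ≤ (v - f s₀) * (s₁ - s₀) / (F s₁ - f s₀) := by
        apply div_nonneg _ (le_of_lt he)
        apply mul_nonneg _ (le_of_lt hd)
        linarith [hs₀.2]
      linarith
    have hx1 : x < s₁ := by
      have h1 : (v - f s₀) * (s₁ - s₀) < (F s₁ - f s₀) * (s₁ - s₀) := by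
        apply mul_lt_mul_of_pos_right _ hd
        linarith [hs₁.2]
      have : (v - f s₀) * (s₁ - s₀) / (F s₁ - f s₀) < s₁ - s₀ := by
        rw [div_lt_iff₀ he]
        nlinarith
      linarith
    have hxI : x ∈ Set.Ico (0:ℝ) 1 := by
      constructor
      · linarith [(hT s₀ hs₀.1).1]
      · rcases Finset.mem_insert.1 hs₁.1 with rfl | hs
        · linarith
        · linarith [(hT s₁ hs).2]
    obtain ⟨hax, hbx⟩ := hchar x s₀ s₁ hs₀.1 hs₁.1 hx0 hx1 hgap hxI
    refine ⟨x, hxI, ?_⟩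
    simp only [hg, hax, hbx, hFs₀]
    have hxs : x - s₀ = (v - f s₀) * (s₁ - s₀) / (F s₁ - f s₀) := by
      rw [hxdef]; ring
    rw [hxs]
    field_simp
    ring
  exact ⟨g, ⟨fun x hx => gmapsto x hx, gmono.injOn, gsurj⟩, gmono, gval⟩


/-- Round trip up to time isomorphism: converting a timed braid to the data braid of
fractional parts and back — via any order-preserving injection `f` of the occurring
data into `[0,1)` with `f 0 = 0`, integer parts counting preceding factor-ends — yields
the image of the original word under a single time isomorphism `g`: each resulting
time stamp has the same integer part as the original one and fractional part `g` of
the original fractional part. -/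
theorem roundTrip_upTo_timeIso {A : Type*} (marked : A → Prop) (u : List (A × ℝ))
    (h : IsTimedBraid marked u)
    (P : List (List (A × ℝ)))
    (hP : IsOrderedPartition P (u.map (fun p => (p.1, Int.fract p.2))))
    (f : ℝ → ℝ)
    (hrange : ∀ p ∈ u, f (Int.fract p.2) ∈ Set.Ico (0:ℝ) 1)
    (hmono : ∀ p ∈ u, ∀ q ∈ u,
      Int.fract p.2 < Int.fract q.2 → f (Int.fract p.2) < f (Int.fract q.2))
    (hf0 : f 0 = 0) :
    ∃ g : ℝ → ℝ, Set.BijOn g (Set.Ico 0 1) (Set.Ico 0 1) ∧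
      StrictMonoOn g (Set.Ico 0 1) ∧
      ∀ i (hi : i < u.length),
        (factorsEndedBefore P i : ℝ) + f (Int.fract (u.get ⟨i, hi⟩).2)
          = (⌊(u.get ⟨i, hi⟩).2⌋ : ℝ) + g (Int.fract (u.get ⟨i, hi⟩).2) := by
  classical
  rcases eq_or_ne u [] with rfl | hne
  · exact ⟨id, Set.bijOn_id _, fun x _ y _ hxy => hxy, by intro i hi; simp at hi⟩
  have hul : 0 < u.length := List.length_pos_iff.2 hne
  set w := u.map (fun p => (p.1, Int.fract p.2)) with hwdef
  have hlen : w.length = u.length := List.length_map _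
  -- fEB equals floor
  have key : ∀ i (hi : i < u.length), (factorsEndedBefore P i : ℤ) = ⌊(u[i]'hi).2⌋ := by
    intro i
    induction i with
    | zero =>
      intro hi
      have h0 : (u[0]'hi).2 = 0 := by
        have := h.1 (u.head hne) (by rw [List.head?_eq_head hne]; rfl)
        rw [List.head_eq_getElem] at this
        exact this
      rw [h0, partB_zero P w hP (by omega)]
      simp
    | succ n ih =>
      intro hi
      have hn : n < u.length := by omega
      have hstepA := timed_floor_succ h (i := n) hi
      have hstepB := partB_step P w hP (i := n) (by omega)
      have hwn : (w[n]'(by omega)).2 = Int.fract (u[n]'hn).2 := by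
        simp [hwdef]
      have hwn1 : (w[n+1]'(by omega)).2 = Int.fract (u[n+1]'hi).2 := by
        simp [hwdef]
      rcases hstepB with ⟨hltB, hfe⟩ | ⟨hleB, hfe⟩
      · rw [hwn, hwn1] at hltB
        rcases hstepA with ⟨_, hfl⟩ | ⟨hge, _⟩
        · rw [hfe, hfl]
          exact ih hn
        · exact absurd hltB (not_lt.2 hge)
      · rw [hwn, hwn1] at hleB
        rcases hstepA with ⟨hltA, _⟩ | ⟨_, hfl⟩
        · exact absurd hltA (not_lt.2 hleB)
        · rw [hfe, hfl]
          have := ih hn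
          push_cast
          omega
  -- the set of occurring fractional parts
  set T : Finset ℝ := (u.map (fun p => Int.fract p.2)).toFinset with hTdef
  have hmemT : ∀ s, s ∈ T ↔ ∃ p ∈ u, Int.fract p.2 = s := by
    intro s
    simp [hTdef, List.mem_map]
  have hT0 : (0:ℝ) ∈ T := by
    rw [hmemT]
    refine ⟨u.head hne, List.head_mem hne, ?_⟩
    have := h.1 (u.head hne) (by rw [List.head?_eq_head hne]; rfl)
    rw [this]
    exact Int.fract_zero
  have hTI : ∀ s ∈ T, s ∈ Set.Ico (0:ℝ) 1 := by
    intro s hs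
    obtain ⟨p, hp, rfl⟩ := (hmemT s).1 hs
    exact ⟨Int.fract_nonneg _, Int.fract_lt_one _⟩
  have hfI : ∀ s ∈ T, f s ∈ Set.Ico (0:ℝ) 1 := by
    intro s hs
    obtain ⟨p, hp, rfl⟩ := (hmemT s).1 hs
    exact hrange p hp
  have hfmonoT : ∀ s ∈ T, ∀ t ∈ T, s < t → f s < f t := by
    intro s hs t ht hst
    obtain ⟨p, hp, rfl⟩ := (hmemT s).1 hs
    obtain ⟨q, hq, rfl⟩ := (hmemT t).1 ht
    exact hmono p hp q hq hst
  obtain ⟨g, hbij, hgmono, hgval⟩ := extend_to_bijOn T hT0 hTI f hfI hf0 hfmonoT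
  refine ⟨g, hbij, hgmono, ?_⟩
  intro i hi
  have hmem : Int.fract (u.get ⟨i, hi⟩).2 ∈ T := by
    rw [hmemT]
    exact ⟨u.get ⟨i, hi⟩, by rw [List.get_eq_getElem]; exact List.getElem_mem hi, rfl⟩
  rw [hgval _ hmem]
  have hk := key i hi
  have hkR : ((factorsEndedBefore P i : ℤ) : ℝ) = ((⌊(u[i]'hi).2⌋ : ℤ) : ℝ) := by
    exact_mod_cast congrArg (fun z : ℤ => (z : ℝ)) hk
  simp only [List.get_eq_getElem]
  push_cast at hkR ⊢
  linarith
end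

section
/- A timed word is m-bounded if and only if its associated data word of fractional parts, factored by integer parts, is m-decreasing: for a timed braid w = (a_1,t_1)...(a_n,t_n), all time stamps satisfy t_i < m if and only if the data word ({t_1},...,{t_n}) has at most m−1 positions i with {t_i} ≥ {t_{i+1}}. -/
variable {A : Type*} {D : Type*} [LinearOrder D]

open Classical in
private lemma telescope_count (f : ℕ → ℤ) (P : ℕ → Prop) :
    ∀ n : ℕ, (∀ i < n, f (i+1) = f i + if P i then 1 else 0) →
      f n = f 0 + ((Finset.range n).filter P).card
  | 0, _ => by simp
  | n+1, h => by
    have ih := telescope_count f P n (fun i hi => h i (Nat.lt_succ_of_lt hi))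
    rw [Finset.range_add_one, Finset.filter_insert]
    by_cases hp : P n
    · rw [if_pos hp, Finset.card_insert_of_notMem (by simp), h n (Nat.lt_succ_self n), ih,
        if_pos hp]
      push_cast; ring
    · rw [if_neg hp, h n (Nat.lt_succ_self n), ih, if_neg hp]; ring

private lemma fract_lt_of_floor_eq {a b : ℝ} (hf : ⌊a⌋ = ⌊b⌋) (hab : b < a) :
    Int.fract b < Int.fract a := by
  unfold Int.fract; rw [hf]; linarith

/-- A timed braid is `m`-bounded (all time stamps `< m`) iff its data word of
fractional parts is `m`-decreasing (at most `m - 1` positions `i` with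
`{t i} ≥ {t (i+1)}`). -/
theorem mBounded_iff_mDecreasing {A : Type*} (marked : A → Prop) (u : List (A × ℝ))
    (h : IsTimedBraid marked u) (m : ℕ) (hm : 1 ≤ m) :
    (∀ p ∈ u, p.2 < (m : ℝ)) ↔
      {i : ℕ | ∃ hi : i + 1 < u.length,
        Int.fract (u.get ⟨i + 1, hi⟩).2
          ≤ Int.fract (u.get ⟨i, Nat.lt_of_succ_lt hi⟩).2}.ncard ≤ m - 1 := by
  unfold IsTimedBraid at h
  classical
  obtain ⟨h0, hchain, -, hbr⟩ := h
  rcases eq_or_ne u [] with rfl | hne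
  · have hS : {i : ℕ | ∃ hi : i + 1 < ([] : List (A × ℝ)).length,
        Int.fract (([] : List (A × ℝ)).get ⟨i + 1, hi⟩).2
          ≤ Int.fract (([] : List (A × ℝ)).get ⟨i, Nat.lt_of_succ_lt hi⟩).2} = ∅ := by
      ext i; simp
    simp [hS]
  set n := u.length with hn
  have hn0 : 0 < n := List.length_pos_iff.mpr hne
  set T : ℕ → ℝ := fun i => (u.map Prod.snd).getD i 0 with hTdef
  have hT : ∀ i (hi : i < n), T i = (u.get ⟨i, hi⟩).2 := by
    intro i hi
    have hi' : i < (u.map Prod.snd).length := by simpa using hi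
    show (u.map Prod.snd).getD i 0 = _
    rw [List.getD_eq_getElem _ _ hi', List.getElem_map]
    simp [List.get_eq_getElem]
  have hmono : ∀ i j, i < j → j < n → T i < T j := by
    intro i j hij hj
    have hp := List.pairwise_iff_get.mp (List.isChain_iff_pairwise.mp hchain)
    have hj' : j < (u.map Prod.snd).length := by simpa using hj
    have hi' : i < (u.map Prod.snd).length := by omega
    have h2 := hp ⟨i, hi'⟩ ⟨j, hj'⟩ hij
    rw [hT i (by omega), hT j hj]
    simpa [List.get_eq_getElem, List.getElem_map] using h2
  have hmono' : ∀ i j, i ≤ j → j < n → T i ≤ T j := by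
    intro i j hij hj
    rcases eq_or_lt_of_le hij with rfl | h'
    · exact le_refl _
    · exact (hmono i j h' hj).le
  have hT0 : T 0 = 0 := by
    have := h0 (u.head hne) (by rw [List.head?_eq_head hne]; rfl)
    rw [hT 0 hn0]
    rw [show u.get ⟨0, hn0⟩ = u.head hne by simp [List.head_eq_getElem, List.get_eq_getElem]]
    exact this
  -- last element
  have hlast : u.getLast? = some (u.getLast hne) := List.getLast?_eq_getLast hne
  have hlastT : (u.getLast hne).2 = T (n - 1) := by
    rw [hT (n-1) (by omega)]
    congr 1
    rw [List.getLast_eq_getElem]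
    simp; rfl
  have hbr' : ∀ i (hiu : i < u.length), T i < (⌊T (n-1)⌋ : ℝ) →
      ∃ j, j < u.length ∧ i < j ∧ T j = T i + 1 := by
    intro i hiu hlt
    have hlt' : (u.get ⟨i, hiu⟩).2 < ((⌊(u.getLast hne).2⌋ : ℤ) : ℝ) := by
      rw [← hT i hiu, hlastT]; exact hlt
    obtain ⟨j, hj, hij, heq⟩ := hbr (u.getLast hne) (by rw [hlast]; rfl) i hiu hlt'
    exact ⟨j, hj, hij, by rw [hT j hj, hT i hiu]; exact heq⟩
  set P : ℕ → Prop := fun i => Int.fract (T (i+1)) ≤ Int.fract (T i) with hPdef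
  have key : ∀ i, i + 1 < n → ⌊T (i+1)⌋ = ⌊T i⌋ + if P i then 1 else 0 := by
    intro i hi
    have h1 : T i < T (i+1) := hmono i (i+1) (Nat.lt_succ_self i) hi
    have hle_last : T (i+1) ≤ T (n-1) := hmono' (i+1) (n-1) (by omega) (by omega)
    have hfl : ⌊T i⌋ ≤ ⌊T (i+1)⌋ := Int.floor_le_floor h1.le
    by_cases hc : T i < (⌊T (n-1)⌋ : ℝ)
    · obtain ⟨j, hj, hij, heq'⟩ := hbr' i (by omega) hc
      have hj1 : T (i+1) ≤ T j := hmono' (i+1) j hij hj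
      have h2 : T (i+1) ≤ T i + 1 := by rw [← heq']; exact hj1
      have hfu : ⌊T (i+1)⌋ ≤ ⌊T i⌋ + 1 := by
        rw [← Int.floor_add_one]; exact Int.floor_le_floor h2
      by_cases hf : ⌊T (i+1)⌋ = ⌊T i⌋ + 1
      · have hfr : Int.fract (T (i+1)) ≤ Int.fract (T i) := by
          unfold Int.fract
          rw [hf]; push_cast; linarith
        rw [if_pos hfr, hf]
      · have hfe : ⌊T (i+1)⌋ = ⌊T i⌋ := by omega
        have := fract_lt_of_floor_eq hfe h1
        rw [if_neg (by simpa [hPdef] using not_le.mpr this)]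
        omega
    · have h3 : (⌊T (n-1)⌋ : ℝ) ≤ T i := not_lt.mp hc
      have h4 : ⌊T (n-1)⌋ ≤ ⌊T i⌋ := Int.le_floor.mpr h3
      have h5 : ⌊T (i+1)⌋ ≤ ⌊T (n-1)⌋ := Int.floor_le_floor hle_last
      have hfe : ⌊T (i+1)⌋ = ⌊T i⌋ := by omega
      have := fract_lt_of_floor_eq hfe h1
      rw [if_neg (by simpa [hPdef] using not_le.mpr this)]
      omega
  have htel : ⌊T (n-1)⌋ = ⌊T 0⌋ + ((Finset.range (n-1)).filter P).card :=
    telescope_count (fun i => ⌊T i⌋) P (n - 1) (fun i hi => key i (by omega))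
  have hT0' : ⌊T 0⌋ = 0 := by rw [hT0]; simp
  rw [hT0'] at htel
  -- the set equals the finset
  have hSeq : {i : ℕ | ∃ hi : i + 1 < u.length,
        Int.fract (u.get ⟨i + 1, hi⟩).2
          ≤ Int.fract (u.get ⟨i, Nat.lt_of_succ_lt hi⟩).2}
      = ↑((Finset.range (n-1)).filter P) := by
    ext i
    simp only [Set.mem_setOf_eq, Finset.coe_filter, Finset.mem_range, Set.mem_setOf_eq]
    constructor
    · rintro ⟨hi, hfr⟩
      refine ⟨by omega, ?_⟩
      rw [hPdef]
      simpa [hT (i+1) hi, hT i (Nat.lt_of_succ_lt hi)] using hfr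
    · rintro ⟨hi, hfr⟩
      have hi' : i + 1 < u.length := by omega
      refine ⟨hi', ?_⟩
      rw [hPdef] at hfr
      simpa [hT (i+1) hi', hT i (Nat.lt_of_succ_lt hi')] using hfr
  rw [hSeq, Set.ncard_coe_finset]
  have hcard : (((Finset.range (n-1)).filter P).card : ℤ) = ⌊T (n-1)⌋ := by
    rw [htel]; ring
  -- final chain
  have hbound : (∀ p ∈ u, p.2 < (m : ℝ)) ↔ T (n-1) < (m : ℝ) := by
    constructor
    · intro hb
      rw [← hlastT]
      exact hb _ (List.getLast_mem hne)
    · intro hb p hp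
      obtain ⟨⟨i, hi⟩, rfl⟩ := List.mem_iff_get.mp hp
      calc (u.get ⟨i, hi⟩).2 = T i := (hT i hi).symm
        _ ≤ T (n-1) := hmono' i (n-1) (by omega) (by omega)
        _ < (m : ℝ) := hb
  rw [hbound]
  have : T (n-1) < (m : ℝ) ↔ ⌊T (n-1)⌋ < (m : ℤ) := by
    rw [Int.floor_lt]; push_cast; tauto
  rw [this, ← hcard]
  constructor
  · intro h'
    omega
  · intro h'
    have : (((Finset.range (n-1)).filter P).card : ℤ) ≤ (m : ℤ) - 1 := by
      have := Nat.cast_le (α := ℤ).mpr h'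
      rw [Nat.cast_sub hm] at this
      exact this
    omega
end
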